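/- Let P be a projective geometry, P' a hyperplane of P, Δ a nonempty simple graph, z' : E(Δ) → P' a projective representation of the graphic matroid G(Δ), ê_0 ∈ P∖P', and Ê ⊆ Ê(Δ, ê_0)∖{ê_0}. Then the class of balanced circles of the constructed graph is a linear class, so Ω_0(Ê) is a biased graph, and the correspondence e ↦ ê, e_0 ↦ ê_0 is a matroid isomorphism L_0(Ω_0(Ê)) ≅ M(Ê ∪ {ê_0}). -/

import Mathlib

open scoped Classical

/-! ## Graphs with parallel links and half edges -/

/-- A multigraph: each edge has a finite set of endpoints
(one endpoint for a half edge, two endpoints for a link). -/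
structure MGraph (N : Type*) (E : Type*) where
  ends : E → Finset N

namespace MGraph

variable {N E : Type*} (G : MGraph N E)

/-- A link has two distinct endpoints. -/
def IsLink (e : E) : Prop := (G.ends e).card = 2

/-- A half edge has exactly one endpoint. -/
def IsHalfEdge (e : E) : Prop := (G.ends e).card = 1

/-- The set of nodes of a set of edges. -/
def nodeSet (S : Set E) : Set N := {v | ∃ e ∈ S, v ∈ G.ends e}

/-- The nodes of a finite set of edges. -/
noncomputable def nodesOf (S : Finset E) : Finset N := S.biUnion G.ends

/-- The degree of a node in a finite edge set. -/
noncomputable def degreeIn (S : Finset E) (v : N) : ℕ :=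
  (S.filter (fun e => v ∈ G.ends e)).card

/-- Two nodes joined by an edge of `S`. -/
def adjIn (S : Set E) (u v : N) : Prop := ∃ e ∈ S, u ∈ G.ends e ∧ v ∈ G.ends e

/-- Connectivity of nodes through edges of `S`. -/
def nodeConn (S : Set E) : N → N → Prop := Relation.ReflTransGen (G.adjIn S)

/-- The components of the spanning subgraph `(N, S)`, as sets of nodes. -/
def components (S : Set E) : Set (Set N) := {W | ∃ v : N, W = {u | G.nodeConn S u v}}

/-- The number of components of the spanning subgraph `(N, S)`. -/
noncomputable def numComponents (S : Set E) : ℕ := Nat.card ↥(G.components S)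

/-- The components of the non-spanning subgraph `(N(S), S)`. -/
def componentsOn (S : Set E) : Set (Set N) :=
  {W | ∃ v ∈ G.nodeSet S, W = {u | G.nodeConn S u v}}

/-- The edges of `S` whose endpoints all lie in a node set `W`. -/
def edgesIn (S : Set E) (W : Set N) : Set E := {e | e ∈ S ∧ ∀ v ∈ G.ends e, v ∈ W}

/-- An edge set is connected if any two of its edges are joined through
consecutively intersecting edges of the set. -/
def ConnEdges (S : Set E) : Prop :=
  ∀ e ∈ S, ∀ f ∈ S, Relation.ReflTransGen
    (fun a b => a ∈ S ∧ b ∈ S ∧ ∃ v : N, v ∈ G.ends a ∧ v ∈ G.ends b) e f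

/-- A circle: the edge set of a connected subgraph in which every node has degree 2. -/
def IsCircle (C : Finset E) : Prop :=
  C.Nonempty ∧ (∀ e ∈ C, G.IsLink e) ∧ G.ConnEdges ↑C ∧
    ∀ v ∈ G.nodesOf C, G.degreeIn C v = 2

/-- A (simple, open) path joining two distinct nodes `u` and `v`. -/
def IsPath (Q : Finset E) (u v : N) : Prop :=
  Q.Nonempty ∧ u ≠ v ∧ (∀ e ∈ Q, G.IsLink e) ∧ G.ConnEdges ↑Q ∧
    u ∈ G.nodesOf Q ∧ v ∈ G.nodesOf Q ∧
    G.degreeIn Q u = 1 ∧ G.degreeIn Q v = 1 ∧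
    ∀ w ∈ G.nodesOf Q, w ≠ u → w ≠ v → G.degreeIn Q w = 2

/-- A simple graph: all edges are links and no two edges have the same endpoints. -/
def IsSimple : Prop := (∀ e : E, G.IsLink e) ∧ Function.Injective G.ends

/-- The graph is connected. -/
def IsConnected : Prop := ∀ u v : N, G.nodeConn Set.univ u v

/-- Inseparable graph: connected, and for every partition of the edge set into two
nonempty parts the two parts share at least two nodes. -/
def IsInseparable : Prop :=
  G.IsConnected ∧ ∀ A B : Set E, A.Nonempty → B.Nonempty → Disjoint A B →
    A ∪ B = Set.univ → ∃ u v : N, u ≠ v ∧ u ∈ G.nodeSet A ∧ u ∈ G.nodeSet B ∧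
      v ∈ G.nodeSet A ∧ v ∈ G.nodeSet B

/-- A linear class of circles: every member is a circle and no theta subgraph (the
union of three pairwise internally disjoint paths with the same two endpoints)
contains exactly two members of the class. -/
def IsLinearClass (B : Set (Finset E)) : Prop :=
  (∀ C ∈ B, G.IsCircle C) ∧
  ∀ u v : N, ∀ P₁ P₂ P₃ : Finset E,
    G.IsPath P₁ u v → G.IsPath P₂ u v → G.IsPath P₃ u v →
    Disjoint P₁ P₂ → Disjoint P₁ P₃ → Disjoint P₂ P₃ →
    (↑(G.nodesOf P₁) ∩ ↑(G.nodesOf P₂) : Set N) = {u, v} →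
    (↑(G.nodesOf P₁) ∩ ↑(G.nodesOf P₃) : Set N) = {u, v} →
    (↑(G.nodesOf P₂) ∩ ↑(G.nodesOf P₃) : Set N) = {u, v} →
    P₁ ∪ P₂ ∈ B → P₁ ∪ P₃ ∈ B → P₂ ∪ P₃ ∈ B

/-- A balanced edge set with respect to a class `B` of balanced circles:
no half edges, and every circle inside it belongs to `B`. -/
def IsBalancedSet (B : Set (Finset E)) (S : Set E) : Prop :=
  (∀ e ∈ S, G.IsLink e) ∧ ∀ C : Finset E, ↑C ⊆ S → G.IsCircle C → C ∈ B

/-- The number of balanced components of the spanning subgraph `(N, S)`. -/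
noncomputable def numBalComponents (B : Set (Finset E)) (S : Set E) : ℕ :=
  Nat.card ↥{W : Set N | W ∈ G.components S ∧ G.IsBalancedSet B (G.edgesIn S W)}

/-- Frame matroid rank function: `rk S = #N - b(S)`. -/
noncomputable def frameRk [Fintype N] (B : Set (Finset E)) (S : Set E) : ℕ :=
  Fintype.card N - G.numBalComponents B S

/-- Graphic (cycle) matroid rank function: `rk S = #N - c(S)`. -/
noncomputable def graphicRk [Fintype N] (S : Set E) : ℕ :=
  Fintype.card N - G.numComponents S

/-- Graphic matroid rank of a finite edge set, computed inside its own node set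
(valid also for infinite graphs): `rk S = #N(S) - c(N(S), S)`. -/
noncomputable def graphicRkOn (S : Finset E) : ℕ :=
  (G.nodesOf S).card - Nat.card ↥(G.componentsOn ↑S)

/-- Extended lift matroid rank function on `E ⊕ Unit`, where `Sum.inr ()` is the
extra point `e₀`: `rk S = #N - c(S ∩ E)` if `S ⊆ E` is balanced, and
`#N - c(S ∩ E) + 1` if `S` is unbalanced or contains `e₀`. -/
noncomputable def liftRk [Fintype N] (B : Set (Finset E)) (S : Set (E ⊕ Unit)) : ℕ :=
  if G.IsBalancedSet B {e | Sum.inl e ∈ S} ∧ Sum.inr () ∉ S then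
    Fintype.card N - G.numComponents {e | Sum.inl e ∈ S}
  else Fintype.card N - G.numComponents {e | Sum.inl e ∈ S} + 1

/-- Closed sets of the frame matroid (via the rank function; the matroid is finitary). -/
def FrameClosed [Fintype N] (B : Set (Finset E)) (S : Set E) : Prop :=
  ∀ e : E, (∃ S₀ : Finset E, ↑S₀ ⊆ S ∧
    G.frameRk B ↑(insert e S₀) = G.frameRk B ↑S₀) → e ∈ S

/-- Closed sets of the extended lift matroid. -/
def LiftClosed [Fintype N] (B : Set (Finset E)) (S : Set (E ⊕ Unit)) : Prop :=
  ∀ x : E ⊕ Unit, (∃ S₀ : Finset (E ⊕ Unit), ↑S₀ ⊆ S ∧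
    G.liftRk B ↑(insert x S₀) = G.liftRk B ↑S₀) → x ∈ S

/-- The balance-closure of an edge set. -/
def bcl (B : Set (Finset E)) (S : Set E) : Set E :=
  S ∪ {e | ∃ C ∈ B, e ∈ C ∧ ↑C ⊆ S ∪ {e}}

/-- The subgraph of all links, as a graph on the same nodes. -/
def linkGraph : MGraph N {e : E // G.IsLink e} := ⟨fun e => G.ends e.val⟩

/-- Restriction of a class of circles to the subgraph of links. -/
def linkBal (B : Set (Finset E)) : Set (Finset {e : E // G.IsLink e}) :=
  {C | C.image Subtype.val ∈ B}

/-- The subgraph on a subset of the edges (spanning all nodes). -/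
def sub (D : Set E) : MGraph N ↥D := ⟨fun f => G.ends f.val⟩

end MGraph

/-- A graph together with a distinguished class of "balanced" circles.
(It is a biased graph when the class is a linear class.) -/
structure BiasedGraph (N E : Type*) extends MGraph N E where
  Bal : Set (Finset E)

/-- The complete graph on a node set `N`. -/
def completeMGraph (N : Type*) : MGraph N {q : Finset N // q.card = 2} := ⟨Subtype.val⟩

/-- A gain graph with gain group `Γ`: each edge is given by a source, a target
(equal for a half edge) and a gain in the direction from source to target. -/
structure GainGraph (N E : Type*) (Γ : Type*) [Group Γ] extends MGraph N E where
  src : E → N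
  tgt : E → N
  gain : E → Γ
  ends_eq : ∀ e : E, ends e = {src e, tgt e}

namespace GainGraph

variable {N E Γ : Type*} [Group Γ] (Φ : GainGraph N E Γ)

/-- The gain of an edge in the direction from `u` to `v`. -/
noncomputable def ogain (e : E) (u v : N) : Γ :=
  if Φ.src e = u ∧ Φ.tgt e = v then Φ.gain e else (Φ.gain e)⁻¹

/-- A balanced circle of a gain graph: a circle whose gain function is given by a
potential on the nodes (equivalently, the product of its gains along a cyclic
orientation is the identity). -/
def BalancedCircle (C : Finset E) : Prop :=
  Φ.toMGraph.IsCircle C ∧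
    ∃ θ : N → Γ, ∀ e ∈ C, Φ.gain e = (θ (Φ.src e))⁻¹ * θ (Φ.tgt e)

/-- The biased graph `⟨Φ⟩` of a gain graph. -/
def biasedGraph : BiasedGraph N E := { Φ.toMGraph with Bal := {C | Φ.BalancedCircle C} }

end GainGraph

/-- A biased expansion of a graph `Δ` along a projection `p`: `p` is surjective,
preserves endpoints, and every circle of `Δ` with a chosen lift of all but one of
its edges has a unique completion to a balanced circle. -/
def IsBiasedExpansion {N E E' : Type*} (G : MGraph N E) (B : Set (Finset E))
    (Δ : MGraph N E') (p : E → E') : Prop :=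
  Function.Surjective p ∧ (∀ e : E, G.ends e = Δ.ends (p e)) ∧
  ∀ C : Finset E', Δ.IsCircle C → ∀ e₀ ∈ C, ∀ s : E' → E,
    (∀ f ∈ C.erase e₀, p (s f) = f) →
    ∃! t : E, p t = e₀ ∧ (C.erase e₀).image s ∪ {t} ∈ B

/-! ## Axiomatic (synthetic) projective geometry -/

/-- An axiomatic projective geometry: a point set with a line through any two
points, unique when the points are distinct, every line having at least three
points, and satisfying the Veblen–Young axiom. -/
structure ProjGeom (P : Type*) where
  line : P → P → Set P
  line_self : ∀ p : P, line p p = {p}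
  line_symm : ∀ p q : P, line p q = line q p
  left_mem_line : ∀ p q : P, p ∈ line p q
  right_mem_line : ∀ p q : P, q ∈ line p q
  line_unique : ∀ p q x y : P, p ≠ q → x ∈ line p q → y ∈ line p q → x ≠ y →
    line x y = line p q
  exists_third : ∀ p q : P, p ≠ q → ∃ r ∈ line p q, r ≠ p ∧ r ≠ q
  veblen : ∀ p q r s x : P, p ≠ q → r ≠ s → p ≠ r → q ≠ s →
    x ∈ line p q → x ∈ line r s → ∃ y, y ∈ line p r ∧ y ∈ line q s

namespace ProjGeom

variable {P : Type*} (G : ProjGeom P)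

/-- A flat (subspace): a line-closed set of points. -/
def IsFlat (t : Set P) : Prop := ∀ p ∈ t, ∀ q ∈ t, G.line p q ⊆ t

/-- The span of a point set: the smallest flat containing it. -/
def span (A : Set P) : Set P := ⋂₀ {t : Set P | G.IsFlat t ∧ A ⊆ t}

/-- An independent point set: no point is in the span of the others. -/
def Indep (A : Set P) : Prop := ∀ a ∈ A, a ∉ G.span (A \ {a})

/-- The (matroid) rank of a point set: the largest cardinality of a finite
independent subset. -/
noncomputable def rank (A : Set P) : ℕ :=
  sSup {n : ℕ | ∃ B : Finset P, ↑B ⊆ A ∧ G.Indep ↑B ∧ B.card = n}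

/-- A hyperplane: a maximal proper flat. -/
def IsHyperplane (h : Set P) : Prop :=
  G.IsFlat h ∧ h ≠ Set.univ ∧ ∀ t : Set P, G.IsFlat t → h ⊆ t → t = h ∨ t = Set.univ

/-- The codimension of a flat: the least number of hyperplanes intersecting in it. -/
noncomputable def codim (t : Set P) : ℕ :=
  sInf {n : ℕ | ∃ H : Finset (Set P), H.card = n ∧ (∀ h ∈ H, G.IsHyperplane h) ∧
    ⋂₀ ↑H = t}

variable {N : Type*}

/-- A cross-flat with respect to an independent family `ν`: a flat containing
none of the points `ν v`. -/
def crossFlat (ν : N → P) (t : Set P) : Prop := G.IsFlat t ∧ ∀ v : N, ν v ∉ t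

/-- The union of all edge lines of the independent family `ν`. -/
def edgeLineUnion (ν : N → P) : Set P :=
  ⋃ (v : N) (w : N) (_ : v ≠ w), G.line (ν v) (ν w)

/-! ### The Menelaean (point) construction for the frame matroid -/

/-- The underlying graph of the Menelaean construction `Ω(N̂, Ehat)`: a point of `Ehat`
in `N̂` is a half edge, any other point is a link joining the ends of its edge line. -/
noncomputable def menGraph (ν : N → P) (Ehat : Set P)
    (hE : ∀ x ∈ Ehat, x ∉ Set.range ν →
      ∃ pr : N × N, pr.1 ≠ pr.2 ∧ x ∈ G.line (ν pr.1) (ν pr.2)) :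
    MGraph N ↥Ehat where
  ends e :=
    if h : (e : P) ∈ Set.range ν then {(show ∃ v : N, ν v = ↑e from h).choose}
    else {(hE e e.2 h).choose.1, (hE e e.2 h).choose.2}

/-- The balanced circles of the Menelaean construction: circles whose point set
lies in a cross-flat. -/
noncomputable def menBal (ν : N → P) (Ehat : Set P)
    (hE : ∀ x ∈ Ehat, x ∉ Set.range ν →
      ∃ pr : N × N, pr.1 ≠ pr.2 ∧ x ∈ G.line (ν pr.1) (ν pr.2)) :
    Set (Finset ↥Ehat) :=
  {C | (G.menGraph ν Ehat hE).IsCircle C ∧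
    ∃ t : Set P, G.crossFlat ν t ∧ ∀ e ∈ C, (e : P) ∈ t}

/-! ### The Cevian (hyperplane) construction for the frame matroid -/

/-- A Cevian arrangement over the point basis `ν`, described by its associated
graph `Γ` and its apex function: a link `e` with endpoints `v, w` has its apex on
the edge line `v̂ŵ`, off the basis; a half edge at `v` has apex `ν v`. -/
def IsCevian {E : Type*} (ν : N → P) (Γ : MGraph N E) (apex : E → P) : Prop :=
  ∀ e : E,
    (∃ v w : N, v ≠ w ∧ Γ.ends e = ({v, w} : Finset N) ∧
      apex e ∈ G.line (ν v) (ν w) ∧ apex e ∉ Set.range ν) ∨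
    (∃ v : N, Γ.ends e = ({v} : Finset N) ∧ apex e = ν v)

/-- The apical hyperplane of an edge of a Cevian arrangement. -/
def cevHyp {E : Type*} (ν : N → P) (Γ : MGraph N E) (apex : E → P) (e : E) : Set P :=
  if Γ.IsLink e then G.span ((ν '' {u : N | u ∉ Γ.ends e}) ∪ {apex e})
  else G.span (ν '' {u : N | u ∉ Γ.ends e})

/-- The rank function of a Cevian arrangement:
the codimension of the intersection of the corresponding apical hyperplanes. -/
noncomputable def cevRk {E : Type*} (ν : N → P) (Γ : MGraph N E) (apex : E → P)
    (S : Finset E) : ℕ :=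
  G.codim (⋂ e ∈ S, G.cevHyp ν Γ apex e)

/-- The balanced circles of a Cevian arrangement:
circles of deficient hyperplane-intersection rank. -/
noncomputable def cevBal {E : Type*} (ν : N → P) (Γ : MGraph N E) (apex : E → P) :
    Set (Finset E) :=
  {C | Γ.IsCircle C ∧ G.cevRk ν Γ apex C < C.card}

/-! ### The orthographic (point) construction for the lift matroid -/

/-- The projection of the orthographic construction: each point of `Ehat` lies on the
edge line `z'(f)e₀` of a unique edge `f` of `Δ`. -/
noncomputable def orthoProj {E' : Type*} (z' : E' → P) (e₀ : P) (Ehat : Set P)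
    (hE : ∀ x ∈ Ehat, ∃ f : E', x ∈ G.line (z' f) e₀) : ↥Ehat → E' :=
  fun e => (hE e e.2).choose

/-- The underlying graph of the orthographic construction `Ω₀(Ehat)`. -/
noncomputable def orthoGraph {E' : Type*} (Δ : MGraph N E') (z' : E' → P) (e₀ : P)
    (Ehat : Set P) (hE : ∀ x ∈ Ehat, ∃ f : E', x ∈ G.line (z' f) e₀) : MGraph N ↥Ehat :=
  ⟨fun e => Δ.ends (G.orthoProj z' e₀ Ehat hE e)⟩

/-- The balanced circles of the orthographic construction:
circles spanning a cross-flat (a flat not containing `e₀`). -/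
noncomputable def orthoBal {E' : Type*} (Δ : MGraph N E') (z' : E' → P) (e₀ : P)
    (Ehat : Set P) (hE : ∀ x ∈ Ehat, ∃ f : E', x ∈ G.line (z' f) e₀) : Set (Finset ↥Ehat) :=
  {C | (G.orthoGraph Δ z' e₀ Ehat hE).IsCircle C ∧
    e₀ ∉ G.span (Subtype.val '' (↑C : Set ↥Ehat))}

end ProjGeom

/-! ### Synthetic affinographic arrangements -/

/-- A synthetic affinographic arrangement of hyperplanes in the affine geometry
obtained from the projective geometry `G` by deleting the ideal hyperplane `hinf`:
a family of hyperplanes `hP e` (given by their projective completions, with affine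
parts `hP e \ hinf`), with parallel classes indexed by the edges of a graph `Δ` with
links only via the surjection `π`; hyperplanes in the class of `f` have common
ideal part `ideal f`, and the matroid of the ideal parts (rank = codimension inside
`hinf`) is the graphic matroid of `Δ`. -/
def IsAffinographic {P N E E' : Type*} [Fintype N] (G : ProjGeom P) (hinf : Set P)
    (hP : E → Set P) (Δ : MGraph N E') (π : E → E') (ideal : E' → Set P) : Prop :=
  G.IsHyperplane hinf ∧ (∀ f : E', Δ.IsLink f) ∧ Function.Surjective π ∧
  Function.Injective hP ∧ Function.Injective ideal ∧
  (∀ e : E, G.IsHyperplane (hP e) ∧ hP e ≠ hinf ∧ hP e ∩ hinf = ideal (π e)) ∧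
  ∀ S : Finset E', Δ.graphicRk (↑S : Set E') = G.codim (hinf ∩ ⋂ f ∈ S, ideal f) - 1

/-- The underlying graph of the biased graph `Ω(A)` of an affinographic
arrangement: each edge of `Δ` is replaced by the edges of its parallel class. -/
def affinoGraph {N E E' : Type*} (Δ : MGraph N E') (π : E → E') : MGraph N E :=
  ⟨fun e => Δ.ends (π e)⟩

/-- The affine intersection `t_A(S)` of the hyperplanes of `S`. -/
def affInter {P E : Type*} (hinf : Set P) (hP : E → Set P) (S : Set E) : Set P :=
  ⋂ e ∈ S, (hP e \ hinf)

/-- The balanced circles of `Ω(A)`: digons over a single edge of `Δ` are unbalanced;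
any other circle is balanced iff its affine intersection is nonempty. -/
def affinoBal {P N E E' : Type*} (_G : ProjGeom P) (hinf : Set P) (hP : E → Set P)
    (Δ : MGraph N E') (π : E → E') : Set (Finset E) :=
  {C | (affinoGraph Δ π).IsCircle C ∧ ¬(∃ f : E', ∀ e ∈ C, π e = f) ∧
    (affInter hinf hP ↑C).Nonempty}

/-! ### Coordinatized projective spaces -/

/-- The rank of a finite set of points of a coordinatized projective space:
the dimension of the linear span of representative vectors. -/
noncomputable def projRank (F : Type*) {V : Type*} [DivisionRing F] [AddCommGroup V]
    [Module F V] (A : Finset (Projectivization F V)) : ℕ :=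
  Module.finrank F ↥(Submodule.span F (Projectivization.rep '' (↑A : Set (Projectivization F V))))

/-- The edge set of the full biased graph `Ω^•`: the edges of `Ω` together with a
new half edge at every node not already supporting one. -/
def FullE {N E : Type*} (Ω : BiasedGraph N E) : Type _ :=
  E ⊕ {v : N // ∀ e : E, Ω.ends e ≠ ({v} : Finset N)}

/-- The underlying graph of the full biased graph `Ω^•`. -/
def fullGraph {N E : Type*} (Ω : BiasedGraph N E) : MGraph N (FullE Ω) :=
  ⟨Sum.elim Ω.ends (fun v => {v.val})⟩

/-- The balanced circles of the full biased graph `Ω^•` (circles avoid half edges). -/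
def fullBal {N E : Type*} (Ω : BiasedGraph N E) : Set (Finset (FullE Ω)) :=
  {C | ∃ C₀ ∈ Ω.Bal, C = C₀.image Sum.inl}


attribute [-instance] Subtype.instDecidableEq

/-! ## Auxiliary development: synthetic projective geometry -/

namespace ProjGeom

variable {P : Type*} (G : ProjGeom P)

theorem isFlat_sInter {F : Set (Set P)} (h : ∀ t ∈ F, G.IsFlat t) : G.IsFlat (⋂₀ F) := by
  intro p hp q hq x hx t ht
  exact h t ht p (hp t ht) q (hq t ht) hx

theorem isFlat_span (A : Set P) : G.IsFlat (G.span A) :=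
  G.isFlat_sInter (fun t ht => ht.1)

theorem subset_span (A : Set P) : A ⊆ G.span A := by
  intro a ha t ht; exact ht.2 ha

theorem span_le {A t : Set P} (ht : G.IsFlat t) (hA : A ⊆ t) : G.span A ⊆ t := by
  intro x hx; exact hx t ⟨ht, hA⟩

theorem span_mono {A B : Set P} (h : A ⊆ B) : G.span A ⊆ G.span B :=
  G.span_le (G.isFlat_span B) (h.trans (G.subset_span B))

theorem span_le_span {A B : Set P} (h : A ⊆ G.span B) : G.span A ⊆ G.span B :=
  G.span_le (G.isFlat_span B) h

theorem span_empty : G.span (∅ : Set P) = ∅ := by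
  have : G.IsFlat (∅ : Set P) := by intro p hp; exact absurd hp (Set.notMem_empty p)
  exact Set.subset_empty_iff.mp (G.span_le this (le_refl _))

theorem line_subset_span (p q : P) {A : Set P} (hp : p ∈ G.span A) (hq : q ∈ G.span A) :
    G.line p q ⊆ G.span A :=
  G.isFlat_span A p hp q hq

theorem mem_span_pair {p a b : P} (h : p ∈ G.line a b) : p ∈ G.span {a, b} :=
  G.line_subset_span a b (G.subset_span _ (by simp)) (G.subset_span _ (by simp)) h

/-- The join of a flat and a point. -/
def joinSet (F : Set P) (q : P) : Set P := {x | x = q ∨ ∃ a ∈ F, x ∈ G.line q a}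

theorem mem_joinSet_of_mem {F : Set P} {q : P} {a : P} (ha : a ∈ F) : a ∈ G.joinSet F q :=
  Or.inr ⟨a, ha, G.right_mem_line q a⟩

theorem q_mem_joinSet {F : Set P} {q : P} : q ∈ G.joinSet F q := Or.inl rfl

theorem line_q_eq {q c x : P} (hq : x ≠ q) (hx : x ∈ G.line q c) :
    G.line q x = G.line q c := by
  rcases eq_or_ne q c with rfl | hqc
  · rw [G.line_self] at hx; exact absurd hx hq
  · exact G.line_unique q c q x hqc (G.left_mem_line q c) hx (Ne.symm hq)

theorem joinSet_closed_of_mem {F : Set P} {q w : P} (hF : G.IsFlat F)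
    (hw : w ∈ G.joinSet F q) {z : P} (hz : z ∈ G.line q w) : z ∈ G.joinSet F q := by
  rcases hw with rfl | ⟨c, hc, hwc⟩
  · rw [G.line_self] at hz; exact Or.inl hz
  rcases eq_or_ne w q with rfl | hwq
  · rw [G.line_self] at hz; exact Or.inl hz
  · rw [G.line_q_eq hwq hwc] at hz
    exact Or.inr ⟨c, hc, hz⟩

theorem isFlat_joinSet {F : Set P} (hF : G.IsFlat F) (q : P) : G.IsFlat (G.joinSet F q) := by
  intro x hx y hy z hz
  rcases eq_or_ne x y with rfl | hxy
  · rw [G.line_self] at hz; rw [Set.mem_singleton_iff] at hz; subst hz; exact hx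
  rcases eq_or_ne z q with rfl | hzq
  · exact Or.inl rfl
  rcases eq_or_ne z x with rfl | hzx
  · exact hx
  rcases eq_or_ne z y with rfl | hzy
  · exact hy
  rcases eq_or_ne x q with rfl | hxq
  · exact G.joinSet_closed_of_mem hF hy hz
  rcases eq_or_ne y q with rfl | hyq
  · rw [G.line_symm] at hz
    exact G.joinSet_closed_of_mem hF hx hz
  rcases hx with rfl | ⟨a, ha, hxa⟩
  · exact absurd rfl hxq
  rcases hy with rfl | ⟨b, hb, hyb⟩
  · exact absurd rfl hyq
  have haq : a ≠ q := by
    rintro rfl; rw [G.line_self, Set.mem_singleton_iff] at hxa; exact hxq hxa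
  have hbq : b ≠ q := by
    rintro rfl; rw [G.line_self, Set.mem_singleton_iff] at hyb; exact hyq hyb
  by_cases hyla : y ∈ G.line q a
  · have hline : G.line x y = G.line q a := G.line_unique q a x y (Ne.symm haq) hxa hyla hxy
    exact Or.inr ⟨a, ha, hline ▸ hz⟩
  have hab : a ≠ b := by rintro rfl; exact hyla hyb
  have hay : a ≠ y := fun h => hyla (h ▸ G.right_mem_line q a)
  have hxzy : x ∈ G.line z y := by
    have hline : G.line z y = G.line x y :=
      G.line_unique x y z y hxy hz (G.right_mem_line x y) hzy
    rw [hline]; exact G.left_mem_line x y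
  obtain ⟨w, hwqz, hway⟩ := G.veblen q a z y x (Ne.symm haq) hzy (Ne.symm hzq) hay hxa hxzy
  have hwq : w ≠ q := by
    intro h
    rw [h] at hway
    have hline : G.line q a = G.line a y :=
      G.line_unique a y q a hay hway (G.left_mem_line a y) (Ne.symm haq)
    exact hyla (hline ▸ G.right_mem_line a y)
  have hwJ : w ∈ G.joinSet F q := by
    rcases eq_or_ne w a with rfl | hwa
    · exact G.mem_joinSet_of_mem ha
    by_cases hyF : y ∈ F
    · exact G.mem_joinSet_of_mem (hF a ha y hyF hway)
    have hyinwa : y ∈ G.line w a := by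
      have hline : G.line w a = G.line a y :=
        G.line_unique a y w a hay hway (G.left_mem_line a y) hwa
      rw [hline]; exact G.right_mem_line a y
    obtain ⟨c, hcwq, hcab⟩ := G.veblen w a q b y hwa (Ne.symm hbq) hwq hab hyinwa hyb
    have hcF : c ∈ F := hF a ha b hb hcab
    rcases eq_or_ne c q with hcq | hcq
    · rw [hcq] at hcF
      exact absurd (hF q hcF b hb hyb) hyF
    · have hline : G.line q c = G.line q w := by
        rw [G.line_symm] at hcwq
        exact G.line_q_eq hcq hcwq
      exact Or.inr ⟨c, hcF, by rw [hline]; exact G.right_mem_line q w⟩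
  have hzqw : z ∈ G.line q w := by
    have hline : G.line q w = G.line q z := G.line_q_eq hwq hwqz
    rw [hline]; exact G.right_mem_line q z
  exact G.joinSet_closed_of_mem hF hwJ hzqw

theorem span_insert (q : P) (A : Set P) :
    G.span (insert q A) = G.joinSet (G.span A) q := by
  apply Set.Subset.antisymm
  · apply G.span_le (G.isFlat_joinSet (G.isFlat_span A) q)
    intro p hp
    rcases hp with rfl | hp
    · exact G.q_mem_joinSet
    · exact G.mem_joinSet_of_mem (G.subset_span A hp)
  · rintro p (rfl | ⟨a, ha, hpa⟩)
    · exact G.subset_span _ (Set.mem_insert p A)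
    · refine G.line_subset_span q a ?_ ?_ hpa
      · exact G.subset_span _ (Set.mem_insert q A)
      · exact G.span_mono (Set.subset_insert q A) ha

theorem exchange {A : Set P} {p q : P} (hp : p ∈ G.span (insert q A))
    (hpA : p ∉ G.span A) : q ∈ G.span (insert p A) := by
  rw [G.span_insert] at hp
  rcases hp with rfl | ⟨a, ha, hpa⟩
  · exact G.subset_span _ (Set.mem_insert p A)
  · have hpa' : p ≠ a := by rintro rfl; exact hpA ha
    have hline : G.line p a = G.line q a := by
      rcases eq_or_ne q a with rfl | hqa
      · rw [G.line_self, Set.mem_singleton_iff] at hpa; exact absurd (hpa ▸ ha) hpA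
      · exact G.line_unique q a p a (Ne.symm (fun h => hqa h.symm)) hpa
          (G.right_mem_line q a) hpa'
    have : q ∈ G.line p a := hline ▸ G.left_mem_line q a
    refine G.line_subset_span p a ?_ ?_ this
    · exact G.subset_span _ (Set.mem_insert p A)
    · exact G.span_mono (Set.subset_insert p A) ha

end ProjGeom

namespace ProjGeom

variable {P : Type*} (G : ProjGeom P)

theorem indep_mono {A B : Set P} (h : B ⊆ A) (hA : G.Indep A) : G.Indep B := by
  intro b hb hsp
  exact hA b (h hb) (G.span_mono (Set.diff_subset_diff_left h) hsp)

theorem indep_empty : G.Indep (∅ : Set P) := fun a ha => (Set.notMem_empty a ha).elim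

theorem indep_insert {A : Set P} {p : P} (hA : G.Indep A) (hp : p ∉ G.span A) :
    G.Indep (insert p A) := by
  have hpA : p ∉ A := fun h => hp (G.subset_span A h)
  intro a ha hsp
  rcases eq_or_ne a p with rfl | hap
  · rw [Set.insert_diff_self_of_notMem hpA] at hsp
    exact hp hsp
  · have haA : a ∈ A := ha.resolve_left hap
    rw [← Set.insert_diff_singleton_comm (Ne.symm hap)] at hsp
    have h1 : a ∉ G.span (A \ {a}) := hA a haA
    have h2 := G.exchange hsp h1
    rw [Set.insert_diff_singleton, Set.insert_eq_of_mem haA] at h2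
    exact hp h2

theorem steinitz : ∀ (A B : Finset P), G.Indep ↑B → (↑B : Set P) ⊆ G.span ↑A →
    B.card ≤ A.card := by
  suffices H : ∀ (n : ℕ) (A B : Finset P), (B \ A).card = n → G.Indep ↑B →
      (↑B : Set P) ⊆ G.span ↑A → B.card ≤ A.card by
    intro A B h1 h2; exact H _ A B rfl h1 h2
  intro n
  induction n using Nat.strong_induction_on with
  | _ n ih =>
    intro A B hn hBi hBA
    by_cases hsub : B ⊆ A
    · exact Finset.card_le_card hsub
    obtain ⟨b, hbB, hbA⟩ := Finset.not_subset.mp hsub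
    have hBei : G.Indep ↑(B.erase b) := by
      rw [Finset.coe_erase]
      exact G.indep_mono Set.diff_subset hBi
    have hbns : (b : P) ∉ G.span ↑(B.erase b) := by
      rw [Finset.coe_erase]
      exact hBi b (Finset.mem_coe.mpr hbB)
    have hex : ∃ a ∈ A, a ∉ G.span ↑(B.erase b) := by
      by_contra hc
      push_neg at hc
      have hA' : (↑A : Set P) ⊆ G.span ↑(B.erase b) := fun a ha =>
        hc a (Finset.mem_coe.mp ha)
      have : G.span ↑A ⊆ G.span ↑(B.erase b) := G.span_le_span hA'
      exact hbns (this (hBA (Finset.mem_coe.mpr hbB)))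
    obtain ⟨a, haA, hans⟩ := hex
    have hanB : a ∉ B.erase b := fun h => hans (G.subset_span _ (Finset.mem_coe.mpr h))
    set B' : Finset P := insert a (B.erase b) with hB'
    have hB'i : G.Indep ↑B' := by
      rw [hB', Finset.coe_insert]
      exact G.indep_insert hBei hans
    have hB'c : B'.card = B.card := by
      rw [hB', Finset.card_insert_of_notMem hanB, Finset.card_erase_add_one hbB]
    have hB'A : (↑B' : Set P) ⊆ G.span ↑A := by
      rw [hB', Finset.coe_insert]
      intro x hx
      rcases hx with rfl | hx
      · exact G.subset_span _ (Finset.mem_coe.mpr haA)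
      · rw [Finset.coe_erase] at hx
        exact hBA hx.1
    have hmeas : (B' \ A).card < n := by
      have h1 : B' \ A = (B.erase b) \ A := by
        rw [hB', Finset.insert_sdiff_of_mem _ haA]
      have h2 : (B.erase b) \ A ⊆ (B \ A).erase b := by
        intro x hx
        rw [Finset.mem_sdiff, Finset.mem_erase] at hx
        rw [Finset.mem_erase, Finset.mem_sdiff]
        exact ⟨hx.1.1, hx.1.2, hx.2⟩
      have h3 : b ∈ B \ A := Finset.mem_sdiff.mpr ⟨hbB, hbA⟩
      calc (B' \ A).card = ((B.erase b) \ A).card := by rw [h1]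
        _ ≤ ((B \ A).erase b).card := Finset.card_le_card h2
        _ < (B \ A).card := Finset.card_erase_lt_of_mem h3
        _ = n := hn
    have := ih _ hmeas A B' rfl hB'i hB'A
    omega

theorem rank_bddAbove (A : Finset P) :
    BddAbove {n : ℕ | ∃ B : Finset P, ↑B ⊆ (↑A : Set P) ∧ G.Indep ↑B ∧ B.card = n} := by
  refine ⟨A.card, ?_⟩
  rintro n ⟨B, hBA, _, rfl⟩
  exact Finset.card_le_card (Finset.coe_subset.mp hBA)

theorem rank_zero_mem (A : Set P) :
    0 ∈ {n : ℕ | ∃ B : Finset P, ↑B ⊆ A ∧ G.Indep ↑B ∧ B.card = n} :=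
  ⟨∅, by simp, by simpa using G.indep_empty, rfl⟩

theorem rank_le_card (A : Finset P) : G.rank ↑A ≤ A.card := by
  refine csSup_le ⟨0, G.rank_zero_mem _⟩ ?_
  rintro n ⟨B, hBA, _, rfl⟩
  exact Finset.card_le_card (Finset.coe_subset.mp hBA)

theorem card_le_rank {A B : Finset P} (h : ↑B ⊆ (↑A : Set P)) (hi : G.Indep ↑B) :
    B.card ≤ G.rank ↑A :=
  le_csSup (G.rank_bddAbove A) ⟨B, h, hi, rfl⟩

theorem exists_rank_witness (A : Finset P) : ∃ B : Finset P, B ⊆ A ∧ G.Indep ↑B ∧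
    B.card = G.rank ↑A ∧ (↑A : Set P) ⊆ G.span ↑B := by
  have hmem := Nat.sSup_mem ⟨0, G.rank_zero_mem (↑A : Set P)⟩ (G.rank_bddAbove A)
  obtain ⟨B, hBA, hBi, hBc⟩ := hmem
  refine ⟨B, Finset.coe_subset.mp hBA, hBi, hBc, ?_⟩
  intro p hp
  by_contra hps
  have hpB : p ∉ B := fun h => hps (G.subset_span _ (Finset.mem_coe.mpr h))
  have hins : (insert p B).card ≤ G.rank ↑A := by
    refine G.card_le_rank ?_ ?_
    · rw [Finset.coe_insert]
      exact Set.insert_subset hp hBA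
    · rw [Finset.coe_insert]
      exact G.indep_insert hBi hps
  rw [Finset.card_insert_of_notMem hpB] at hins
  have hBc' : B.card = G.rank ↑A := hBc
  omega

theorem rank_le_of_subset_span {A A' : Finset P} (h : (↑A : Set P) ⊆ G.span ↑A') :
    G.rank ↑A ≤ G.rank ↑A' := by
  obtain ⟨B, hBA, hBi, hBc, _⟩ := G.exists_rank_witness A
  obtain ⟨B', hB'A, hB'i, hB'c, hB'sp⟩ := G.exists_rank_witness A'
  have h1 : (↑B : Set P) ⊆ G.span ↑B' := by
    intro x hx
    exact G.span_le_span hB'sp (h (Finset.coe_subset.mpr hBA hx))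
  calc G.rank ↑A = B.card := hBc.symm
    _ ≤ B'.card := G.steinitz B' B hBi h1
    _ = G.rank ↑A' := hB'c

theorem rank_mono {A A' : Finset P} (h : A ⊆ A') : G.rank ↑A ≤ G.rank ↑A' :=
  G.rank_le_of_subset_span ((Finset.coe_subset.mpr h).trans (G.subset_span _))

theorem rank_indep {A : Finset P} (h : G.Indep ↑A) : G.rank ↑A = A.card :=
  le_antisymm (G.rank_le_card A) (G.card_le_rank subset_rfl h)

theorem rank_eq_of_span_eq {A B : Finset P} (h : G.span ↑A = G.span ↑B) :
    G.rank ↑A = G.rank ↑B :=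
  le_antisymm (G.rank_le_of_subset_span (h ▸ G.subset_span (↑A : Set P)))
    (G.rank_le_of_subset_span (h ▸ G.subset_span (↑B : Set P)))

theorem rank_insert_of_mem_span {A : Finset P} {p : P} (h : p ∈ G.span ↑A) :
    G.rank ↑(insert p A) = G.rank ↑A := by
  refine le_antisymm ?_ (G.rank_mono (Finset.subset_insert p A))
  refine G.rank_le_of_subset_span ?_
  rw [Finset.coe_insert]
  exact Set.insert_subset h (G.subset_span _)

theorem rank_insert_le (A : Finset P) (p : P) :
    G.rank ↑(insert p A) ≤ G.rank ↑A + 1 := by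
  obtain ⟨B, hBA, hBi, hBc, _⟩ := G.exists_rank_witness (insert p A)
  have h1 : (B.erase p).card ≤ G.rank ↑A := by
    refine G.card_le_rank ?_ ?_
    · intro x hx
      rw [Finset.coe_erase] at hx
      have hxB : x ∈ (↑B : Set P) := hx.1
      have := Finset.coe_subset.mpr hBA hxB
      rw [Finset.coe_insert] at this
      rcases this with rfl | hh
      · exact absurd rfl hx.2
      · exact hh
    · rw [Finset.coe_erase]
      exact G.indep_mono Set.diff_subset hBi
  have h2 : B.card ≤ (B.erase p).card + 1 := by
    by_cases hpB : p ∈ B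
    · rw [Finset.card_erase_add_one hpB]
    · rw [Finset.erase_eq_of_notMem hpB]; omega
  omega

theorem rank_insert_of_not_mem_span {A : Finset P} {p : P} (h : p ∉ G.span ↑A) :
    G.rank ↑(insert p A) = G.rank ↑A + 1 := by
  refine le_antisymm (G.rank_insert_le A p) ?_
  obtain ⟨B, hBA, hBi, hBc, hBsp⟩ := G.exists_rank_witness A
  have hpB : p ∉ G.span ↑B := fun hh =>
    h (G.span_le_span ((Finset.coe_subset.mpr hBA).trans (G.subset_span _)) hh)
  have hpBm : p ∉ B := fun hh => hpB (G.subset_span _ (Finset.mem_coe.mpr hh))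
  have : (insert p B).card ≤ G.rank ↑(insert p A) := by
    refine G.card_le_rank ?_ ?_
    · rw [Finset.coe_insert, Finset.coe_insert]
      exact Set.insert_subset_insert (Finset.coe_subset.mpr hBA)
    · rw [Finset.coe_insert]
      exact G.indep_insert hBi hpB
  rw [Finset.card_insert_of_notMem hpBm, hBc] at this
  omega

theorem mem_span_of_rank_insert_le {A : Finset P} {p : P}
    (h : G.rank ↑(insert p A) ≤ G.rank ↑A) : p ∈ G.span ↑A := by
  by_contra hc
  rw [G.rank_insert_of_not_mem_span hc] at h
  omega

theorem exists_extension : ∀ (X I : Finset P), I ⊆ X → G.Indep ↑I →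
    ∃ J : Finset P, I ⊆ J ∧ J ⊆ X ∧ G.Indep ↑J ∧ (↑X : Set P) ⊆ G.span ↑J := by
  suffices H : ∀ (n : ℕ) (X I : Finset P), (X \ I).card = n → I ⊆ X → G.Indep ↑I →
      ∃ J : Finset P, I ⊆ J ∧ J ⊆ X ∧ G.Indep ↑J ∧ (↑X : Set P) ⊆ G.span ↑J by
    intro X I h1 h2; exact H _ X I rfl h1 h2
  intro n
  induction n using Nat.strong_induction_on with
  | _ n ih =>
    intro X I hn hIX hIi
    by_cases hX : (↑X : Set P) ⊆ G.span ↑I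
    · exact ⟨I, subset_rfl, hIX, hIi, hX⟩
    obtain ⟨p, hpX, hps⟩ : ∃ p ∈ X, p ∉ G.span ↑I := by
      by_contra hc
      push_neg at hc
      exact hX (fun x hx => hc x (Finset.mem_coe.mp hx))
    have hpI : p ∉ I := fun h => hps (G.subset_span _ (Finset.mem_coe.mpr h))
    have hIi' : G.Indep ↑(insert p I) := by
      rw [Finset.coe_insert]; exact G.indep_insert hIi hps
    have hmeas : (X \ insert p I).card < n := by
      have h1 : X \ insert p I ⊆ (X \ I).erase p := by
        intro x hx
        rw [Finset.mem_sdiff, Finset.mem_insert] at hx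
        push_neg at hx
        rw [Finset.mem_erase, Finset.mem_sdiff]
        exact ⟨hx.2.1, hx.1, hx.2.2⟩
      have h3 : p ∈ X \ I := Finset.mem_sdiff.mpr ⟨hpX, hpI⟩
      calc (X \ insert p I).card ≤ ((X \ I).erase p).card := Finset.card_le_card h1
        _ < (X \ I).card := Finset.card_erase_lt_of_mem h3
        _ = n := hn
    obtain ⟨J, hJ1, hJ2, hJ3, hJ4⟩ := ih _ hmeas X (insert p I) rfl
      (Finset.insert_subset hpX hIX) hIi'
    exact ⟨J, (Finset.subset_insert p I).trans hJ1, hJ2, hJ3, hJ4⟩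

theorem rank_submod (A B : Finset P) :
    G.rank ↑(A ∪ B) + G.rank ↑(A ∩ B) ≤ G.rank ↑A + G.rank ↑B := by
  obtain ⟨I, hIsub, hIi, hIc, hIsp⟩ := G.exists_rank_witness (A ∩ B)
  obtain ⟨J, hIJ, hJsub, hJi, hJsp⟩ := G.exists_extension (A ∪ B) I
    (hIsub.trans Finset.inter_subset_union) hIi
  have hJcard : J.card = G.rank ↑(A ∪ B) := by
    refine le_antisymm (G.card_le_rank (Finset.coe_subset.mpr hJsub) hJi) ?_
    obtain ⟨B₀, hB₀sub, hB₀i, hB₀c, _⟩ := G.exists_rank_witness (A ∪ B)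
    calc G.rank ↑(A ∪ B) = B₀.card := hB₀c.symm
      _ ≤ J.card := G.steinitz J B₀ hB₀i
          (fun x hx => hJsp (Finset.coe_subset.mpr hB₀sub hx))
  have h1 : (J ∩ A).card ≤ G.rank ↑A :=
    G.card_le_rank (Finset.coe_subset.mpr Finset.inter_subset_right)
      (G.indep_mono (Finset.coe_subset.mpr Finset.inter_subset_left) hJi)
  have h2 : (J ∩ B).card ≤ G.rank ↑B :=
    G.card_le_rank (Finset.coe_subset.mpr Finset.inter_subset_right)
      (G.indep_mono (Finset.coe_subset.mpr Finset.inter_subset_left) hJi)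
  have h3 : (J ∩ A) ∪ (J ∩ B) = J := by
    rw [← Finset.inter_union_distrib_left]
    exact Finset.inter_eq_left.mpr hJsub
  have h4 : I ⊆ (J ∩ A) ∩ (J ∩ B) := by
    intro x hx
    have hx1 := hIJ hx
    have hx2 := hIsub hx
    rw [Finset.mem_inter] at hx2 ⊢
    rw [Finset.mem_inter, Finset.mem_inter]
    exact ⟨⟨hx1, hx2.1⟩, hx1, hx2.2⟩
  have h5 := Finset.card_union_add_card_inter (J ∩ A) (J ∩ B)
  have h6 : I.card ≤ ((J ∩ A) ∩ (J ∩ B)).card := Finset.card_le_card h4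
  rw [h3] at h5
  omega

end ProjGeom

/-! ## Auxiliary development: graph components -/

section CardAux

theorem aux_card_range_le_of_factor {α β γ : Type*} [Finite α] (f : α → β) (g : α → γ)
    (h : ∀ u v : α, g u = g v → f u = f v) :
    Nat.card ↥(Set.range f) ≤ Nat.card ↥(Set.range g) := by
  haveI : Finite ↥(Set.range g) := (Set.finite_range g).to_subtype
  refine Nat.card_le_card_of_surjective
    (fun W : ↥(Set.range g) => (⟨f W.2.choose, ⟨W.2.choose, rfl⟩⟩ : ↥(Set.range f))) ?_
  rintro ⟨y, u, rfl⟩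
  refine ⟨⟨g u, ⟨u, rfl⟩⟩, ?_⟩
  exact Subtype.ext (h _ _ (⟨u, rfl⟩ : ∃ v, g v = g u).choose_spec)

theorem aux_card_range_lt_of_factor {α β γ : Type*} [Finite α] (f : α → β) (g : α → γ)
    (h : ∀ u v : α, g u = g v → f u = f v) (u₀ v₀ : α) (hg : g u₀ ≠ g v₀)
    (hf : f u₀ = f v₀) :
    Nat.card ↥(Set.range f) < Nat.card ↥(Set.range g) := by
  haveI : Finite ↥(Set.range g) := (Set.finite_range g).to_subtype
  haveI : Finite ↥(Set.range f) := (Set.finite_range f).to_subtype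
  set F : ↥(Set.range g) → ↥(Set.range f) :=
    fun W => (⟨f W.2.choose, ⟨W.2.choose, rfl⟩⟩ : ↥(Set.range f)) with hF
  have hFval : ∀ (u : α), (F ⟨g u, ⟨u, rfl⟩⟩ : ↥(Set.range f)).1 = f u := by
    intro u
    exact h _ _ (⟨u, rfl⟩ : ∃ v, g v = g u).choose_spec
  have hsurj : Function.Surjective F := by
    rintro ⟨y, u, rfl⟩
    exact ⟨⟨g u, ⟨u, rfl⟩⟩, Subtype.ext (hFval u)⟩
  have hle := Nat.card_le_card_of_surjective F hsurj
  rcases lt_or_eq_of_le hle with hlt | heq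
  · exact hlt
  · exfalso
    have hbij : Function.Bijective F :=
      (Nat.bijective_iff_surjective_and_card F).mpr ⟨hsurj, heq.symm⟩
    have h1 : F ⟨g u₀, ⟨u₀, rfl⟩⟩ = F ⟨g v₀, ⟨v₀, rfl⟩⟩ := by
      apply Subtype.ext
      rw [hFval u₀, hFval v₀, hf]
    have h2 := hbij.1 h1
    replace h2 := congrArg Subtype.val h2
    exact hg h2

end CardAux

namespace MGraph

variable {N E : Type*} (Γ : MGraph N E)

theorem adjIn_symm {S : Set E} {u v : N} (h : Γ.adjIn S u v) : Γ.adjIn S v u := by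
  obtain ⟨e, he, hu, hv⟩ := h; exact ⟨e, he, hv, hu⟩

theorem nodeConn_refl (S : Set E) (v : N) : Γ.nodeConn S v v := Relation.ReflTransGen.refl

theorem nodeConn_symm {S : Set E} {u v : N} (h : Γ.nodeConn S u v) : Γ.nodeConn S v u :=
  by haveI : Std.Symm (Γ.adjIn S) := ⟨fun _ _ hh => Γ.adjIn_symm hh⟩; exact (Relation.ReflTransGen.stdSymm (r := Γ.adjIn S)).symm _ _ h

theorem nodeConn_trans {S : Set E} {u v w : N} (h1 : Γ.nodeConn S u v)
    (h2 : Γ.nodeConn S v w) : Γ.nodeConn S u w := Relation.ReflTransGen.trans h1 h2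

theorem nodeConn_mono {S T : Set E} (h : S ⊆ T) {u v : N} (hc : Γ.nodeConn S u v) :
    Γ.nodeConn T u v := by
  refine Relation.ReflTransGen.mono ?_ _ _ hc
  rintro a b ⟨e, he, ha, hb⟩
  exact ⟨e, h he, ha, hb⟩

/-- The component of a node. -/
def compOf (S : Set E) (v : N) : Set N := {u | Γ.nodeConn S u v}

theorem mem_compOf_self (S : Set E) (v : N) : v ∈ Γ.compOf S v := Γ.nodeConn_refl S v

theorem compOf_eq_iff {S : Set E} {u v : N} :
    Γ.compOf S u = Γ.compOf S v ↔ Γ.nodeConn S u v := by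
  constructor
  · intro h
    have : u ∈ Γ.compOf S v := h ▸ Γ.mem_compOf_self S u
    exact this
  · intro h
    ext w
    exact ⟨fun hw => Γ.nodeConn_trans hw h, fun hw => Γ.nodeConn_trans hw (Γ.nodeConn_symm h)⟩

theorem components_eq_range (S : Set E) : Γ.components S = Set.range (Γ.compOf S) := by
  ext W
  exact ⟨fun ⟨v, hv⟩ => ⟨v, hv.symm⟩, fun ⟨v, hv⟩ => ⟨v, hv.symm⟩⟩

theorem numComponents_eq (S : Set E) :
    Γ.numComponents S = Nat.card ↥(Set.range (Γ.compOf S)) := by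
  unfold numComponents
  rw [Γ.components_eq_range S]

variable [Fintype N]

theorem numComponents_mono {S T : Set E} (h : S ⊆ T) :
    Γ.numComponents T ≤ Γ.numComponents S := by
  rw [Γ.numComponents_eq, Γ.numComponents_eq]
  refine aux_card_range_le_of_factor _ _ (fun u v huv => ?_)
  rw [Γ.compOf_eq_iff] at huv ⊢
  exact Γ.nodeConn_mono h huv

theorem compOf_empty (v : N) : Γ.compOf (∅ : Set E) v = {v} := by
  ext u
  simp only [Set.mem_singleton_iff]
  constructor
  · intro h
    induction h with
    | refl => rfl
    | tail _ hadj ih =>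
      obtain ⟨e, he, _, _⟩ := hadj
      exact absurd he (Set.notMem_empty e)
  · rintro rfl; exact Γ.nodeConn_refl ∅ u

theorem numComponents_empty : Γ.numComponents (∅ : Set E) = Fintype.card N := by
  rw [Γ.numComponents_eq]
  have : Γ.compOf (∅ : Set E) = fun v => ({v} : Set N) := funext (Γ.compOf_empty)
  rw [this, Nat.card_range_of_injective (fun u v huv => by
    simpa [Set.singleton_eq_singleton_iff] using huv), Nat.card_eq_fintype_card]

theorem numComponents_le (S : Set E) : Γ.numComponents S ≤ Fintype.card N := by
  rw [← Γ.numComponents_empty]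
  exact Γ.numComponents_mono (Set.empty_subset S)

theorem numComponents_lt_of_bridge {S : Set E} {e : E} {v w : N} (he : e ∈ S)
    (hv : v ∈ Γ.ends e) (hw : w ∈ Γ.ends e)
    (hnc : ¬ Γ.nodeConn (S \ {e}) v w) :
    Γ.numComponents S < Γ.numComponents (S \ {e}) := by
  rw [Γ.numComponents_eq, Γ.numComponents_eq]
  refine aux_card_range_lt_of_factor _ _ (fun u u' huv => ?_) v w ?_ ?_
  · rw [Γ.compOf_eq_iff] at huv ⊢
    exact Γ.nodeConn_mono Set.diff_subset huv
  · rw [Ne, Γ.compOf_eq_iff]; exact hnc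
  · rw [Γ.compOf_eq_iff]
    exact Relation.ReflTransGen.single ⟨e, he, hv, hw⟩

theorem nodeConn_replace {S : Set E} {e : E}
    (hrep : ∀ x ∈ Γ.ends e, ∀ y ∈ Γ.ends e, Γ.nodeConn (S \ {e}) x y)
    {u u' : N} (h : Γ.nodeConn S u u') : Γ.nodeConn (S \ {e}) u u' := by
  induction h with
  | refl => exact Γ.nodeConn_refl _ _
  | tail _ hadj ih =>
    obtain ⟨g, hgS, ha, hb⟩ := hadj
    rcases eq_or_ne g e with rfl | hge
    · exact Γ.nodeConn_trans ih (hrep _ ha _ hb)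
    · exact Γ.nodeConn_trans ih (Relation.ReflTransGen.single ⟨g, ⟨hgS, hge⟩, ha, hb⟩)

theorem numComponents_sdiff_of_conn {S : Set E} {e : E} {v w : N} (he : e ∈ S)
    (hsub : ∀ x ∈ Γ.ends e, x = v ∨ x = w)
    (hc : Γ.nodeConn (S \ {e}) v w) :
    Γ.numComponents (S \ {e}) = Γ.numComponents S := by
  refine le_antisymm ?_ (Γ.numComponents_mono Set.diff_subset)
  rw [Γ.numComponents_eq, Γ.numComponents_eq]
  refine aux_card_range_le_of_factor _ _ (fun u u' huv => ?_)
  rw [Γ.compOf_eq_iff] at huv ⊢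
  refine Γ.nodeConn_replace (fun x hx y hy => ?_) huv
  have hx' := hsub x hx
  have hy' := hsub y hy
  rcases hx' with rfl | rfl <;> rcases hy' with rfl | rfl
  · exact Γ.nodeConn_refl _ _
  · exact hc
  · exact Γ.nodeConn_symm hc
  · exact Γ.nodeConn_refl _ _

/-- Splitting lemma: a connection in `S` either avoids `e` or passes through
its endpoints. -/
theorem nodeConn_split {S : Set E} {e : E} {v w : N}
    (hsub : ∀ x ∈ Γ.ends e, x = v ∨ x = w) {u u' : N} (h : Γ.nodeConn S u u') :
    Γ.nodeConn (S \ {e}) u u' ∨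
      ((Γ.nodeConn (S \ {e}) u v ∨ Γ.nodeConn (S \ {e}) u w) ∧
       (Γ.nodeConn (S \ {e}) u' v ∨ Γ.nodeConn (S \ {e}) u' w)) := by
  induction h with
  | refl => exact Or.inl (Γ.nodeConn_refl _ _)
  | @tail b c _ hadj ih =>
    obtain ⟨g, hgS, hb, hc⟩ := hadj
    rcases eq_or_ne g e with rfl | hge
    · -- the step uses e : b, c ∈ ends e
      have hbvw : Γ.nodeConn (S \ {g}) b v ∨ Γ.nodeConn (S \ {g}) b w := by
        rcases hsub b hb with rfl | rfl
        · exact Or.inl (Γ.nodeConn_refl _ _)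
        · exact Or.inr (Γ.nodeConn_refl _ _)
      have hcvw : Γ.nodeConn (S \ {g}) c v ∨ Γ.nodeConn (S \ {g}) c w := by
        rcases hsub c hc with rfl | rfl
        · exact Or.inl (Γ.nodeConn_refl _ _)
        · exact Or.inr (Γ.nodeConn_refl _ _)
      right
      refine ⟨?_, hcvw⟩
      rcases ih with huc | ⟨huvw, _⟩
      · rcases hbvw with h1 | h1
        · exact Or.inl (Γ.nodeConn_trans huc h1)
        · exact Or.inr (Γ.nodeConn_trans huc h1)
      · exact huvw
    · -- the step avoids e
      have hstep : Γ.nodeConn (S \ {e}) b c :=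
        Relation.ReflTransGen.single ⟨g, ⟨hgS, hge⟩, hb, hc⟩
      rcases ih with hub | ⟨huvw, hbvw⟩
      · exact Or.inl (Γ.nodeConn_trans hub hstep)
      · refine Or.inr ⟨huvw, ?_⟩
        rcases hbvw with h1 | h1
        · exact Or.inl (Γ.nodeConn_trans (Γ.nodeConn_symm hstep) h1)
        · exact Or.inr (Γ.nodeConn_trans (Γ.nodeConn_symm hstep) h1)

theorem numComponents_sdiff_le {S : Set E} {e : E} {v w : N}
    (hsub : ∀ x ∈ Γ.ends e, x = v ∨ x = w) :
    Γ.numComponents (S \ {e}) ≤ Γ.numComponents S + 1 := by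
  classical
  rw [Γ.numComponents_eq, Γ.numComponents_eq]
  set S' := S \ {e} with hS'
  set g := Γ.compOf S' with hg
  set f := Γ.compOf S with hf
  set h' : Set N → Set N := fun W => if hW : ∃ u, g u = W then f hW.choose else ∅ with hh'
  have hval : ∀ u : N, h' (g u) = f ((⟨u, rfl⟩ : ∃ x, g x = g u).choose) := by
    intro u
    rw [hh']
    simp only [dif_pos (⟨u, rfl⟩ : ∃ x, g x = g u)]
  have hval2 : ∀ u : N, ∃ u' : N, g u' = g u ∧ h' (g u) = f u' := by
    intro u
    exact ⟨(⟨u, rfl⟩ : ∃ x, g x = g u).choose,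
      (⟨u, rfl⟩ : ∃ x, g x = g u).choose_spec, hval u⟩
  -- the range of g without the class of w injects into the range of f
  have hinj : Set.InjOn h' (Set.range g \ {g w}) := by
    rintro W₁ ⟨⟨u₁, rfl⟩, hW₁⟩ W₂ ⟨⟨u₂, rfl⟩, hW₂⟩ hW
    obtain ⟨u₁', hgu₁, hfu₁⟩ := hval2 u₁
    obtain ⟨u₂', hgu₂, hfu₂⟩ := hval2 u₂
    rw [hfu₁, hfu₂] at hW
    rw [← hgu₁, ← hgu₂]
    rw [hg, Γ.compOf_eq_iff]
    have hconn : Γ.nodeConn S u₁' u₂' := by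
      rw [hf, Γ.compOf_eq_iff] at hW; exact hW
    have hnw₁ : ¬ Γ.nodeConn S' u₁' w := by
      intro hcon
      apply hW₁
      rw [Set.mem_singleton_iff, ← hgu₁, hg, Γ.compOf_eq_iff]
      exact hcon
    have hnw₂ : ¬ Γ.nodeConn S' u₂' w := by
      intro hcon
      apply hW₂
      rw [Set.mem_singleton_iff, ← hgu₂, hg, Γ.compOf_eq_iff]
      exact hcon
    rcases Γ.nodeConn_split hsub hconn with hcc | ⟨h1, h2⟩
    · exact hcc
    · have h1' : Γ.nodeConn S' u₁' v := h1.resolve_right hnw₁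
      have h2' : Γ.nodeConn S' u₂' v := h2.resolve_right hnw₂
      exact Γ.nodeConn_trans h1' (Γ.nodeConn_symm h2')
  have himg : h' '' (Set.range g \ {g w}) ⊆ Set.range f := by
    rintro x ⟨W, hWmem, rfl⟩
    obtain ⟨u, hu⟩ := hWmem.1
    obtain ⟨u', _, hfu⟩ := hval2 u
    rw [← hu]
    exact ⟨u', hfu.symm⟩
  have hfin_f : (Set.range f).Finite := Set.finite_range f
  have hfin_g : (Set.range g).Finite := Set.finite_range g
  have hcount : (Set.range g \ {g w}).ncard ≤ (Set.range f).ncard := by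
    rw [← Set.ncard_image_of_injOn hinj]
    exact Set.ncard_le_ncard himg hfin_f
  have hstep : (Set.range g).ncard ≤ (Set.range g \ {g w}).ncard + 1 := by
    have : Set.range g = insert (g w) (Set.range g \ {g w}) := by
      rw [Set.insert_diff_singleton]
      exact (Set.insert_eq_of_mem (Set.mem_range_self w)).symm
    calc (Set.range g).ncard = (insert (g w) (Set.range g \ {g w})).ncard := by rw [← this]
      _ ≤ (Set.range g \ {g w}).ncard + 1 := Set.ncard_insert_le _ _
  rw [Nat.card_coe_set_eq, Nat.card_coe_set_eq]
  omega

theorem numComponents_sdiff_of_not_conn {S : Set E} {e : E} {v w : N} (he : e ∈ S)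
    (hv : v ∈ Γ.ends e) (hw : w ∈ Γ.ends e)
    (hsub : ∀ x ∈ Γ.ends e, x = v ∨ x = w)
    (hnc : ¬ Γ.nodeConn (S \ {e}) v w) :
    Γ.numComponents (S \ {e}) = Γ.numComponents S + 1 := by
  have h1 := Γ.numComponents_lt_of_bridge he hv hw hnc
  have h2 := Γ.numComponents_sdiff_le (S := S) hsub
  omega

end MGraph

namespace MGraph

variable {N E : Type*} (Γ : MGraph N E)

theorem mem_nodesOf {D : Finset E} {v : N} :
    v ∈ Γ.nodesOf D ↔ ∃ e ∈ D, v ∈ Γ.ends e := by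
  unfold nodesOf; exact Finset.mem_biUnion

theorem ends_subset_nodesOf {D : Finset E} {e : E} (he : e ∈ D) :
    Γ.ends e ⊆ Γ.nodesOf D := fun v hv => Γ.mem_nodesOf.mpr ⟨e, he, hv⟩

theorem nodeSet_mono {S T : Set E} (h : S ⊆ T) : Γ.nodeSet S ⊆ Γ.nodeSet T := by
  rintro v ⟨e, he, hv⟩; exact ⟨e, h he, hv⟩

theorem nodesOf_union (A B : Finset E) : Γ.nodesOf (A ∪ B) = Γ.nodesOf A ∪ Γ.nodesOf B := by
  ext v
  simp only [mem_nodesOf, Finset.mem_union]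
  constructor
  · rintro ⟨e, (he | he), hv⟩
    · exact Or.inl ⟨e, he, hv⟩
    · exact Or.inr ⟨e, he, hv⟩
  · rintro (⟨e, he, hv⟩ | ⟨e, he, hv⟩)
    · exact ⟨e, Or.inl he, hv⟩
    · exact ⟨e, Or.inr he, hv⟩

theorem nodeConn_mix {A B : Set E} (hdisj : Γ.nodeSet A ∩ Γ.nodeSet B = ∅)
    {B₀ : Set E} (hB₀ : B₀ ⊆ B) {v u : N} (h : Γ.nodeConn (A ∪ B₀) v u)
    (hv : v ∈ Γ.nodeSet B) : Γ.nodeConn B₀ v u := by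
  induction h using Relation.ReflTransGen.head_induction_on with
  | refl => exact Γ.nodeConn_refl _ _
  | @head a c hadj _ ih =>
    obtain ⟨g, hg, ha, hc⟩ := hadj
    rcases hg with hgA | hgB₀
    · exfalso
      have : a ∈ Γ.nodeSet A ∩ Γ.nodeSet B := ⟨⟨g, hgA, ha⟩, hv⟩
      rw [hdisj] at this
      exact this
    · have hcB : c ∈ Γ.nodeSet B := ⟨g, hB₀ hgB₀, hc⟩
      exact Relation.ReflTransGen.head ⟨g, hgB₀, ha, hc⟩ (ih hcB)

variable [Fintype N]

theorem numComponents_union_add (A : Finset E) (B : Finset E)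
    (hlinks : ∀ e ∈ B, Γ.IsLink e)
    (hdisj : Γ.nodeSet ↑A ∩ Γ.nodeSet ↑B = ∅) :
    Γ.numComponents (↑A ∪ ↑B) + Fintype.card N
      = Γ.numComponents ↑A + Γ.numComponents ↑B := by
  classical
  induction B using Finset.induction_on with
  | empty =>
    rw [Finset.coe_empty, Set.union_empty, Γ.numComponents_empty]
  | @insert b B₀ hb ih =>
    have hlinks₀ : ∀ e ∈ B₀, Γ.IsLink e := fun e he => hlinks e (Finset.mem_insert_of_mem he)
    have hsubB : (↑B₀ : Set E) ⊆ ↑(insert b B₀) := by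
      intro x hx; rw [Finset.coe_insert]; exact Set.mem_insert_of_mem b hx
    have hdisj₀ : Γ.nodeSet ↑A ∩ Γ.nodeSet ↑B₀ = ∅ := by
      apply Set.eq_empty_of_subset_empty
      rw [← hdisj]
      exact Set.inter_subset_inter_right _ (Γ.nodeSet_mono hsubB)
    obtain ⟨v, w, hvw, hends⟩ := Finset.card_eq_two.mp (hlinks b (Finset.mem_insert_self b B₀))
    have hvb : v ∈ Γ.ends b := by rw [hends]; exact Finset.mem_insert_self v {w}
    have hwb : w ∈ Γ.ends b := by
      rw [hends]; exact Finset.mem_insert_of_mem (Finset.mem_singleton_self w)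
    have hsub : ∀ x ∈ Γ.ends b, x = v ∨ x = w := by
      intro x hx
      rw [hends, Finset.mem_insert, Finset.mem_singleton] at hx
      exact hx
    have hvB : v ∈ Γ.nodeSet ↑(insert b B₀) :=
      ⟨b, by rw [Finset.coe_insert]; exact Set.mem_insert b _, hvb⟩
    have hwB : w ∈ Γ.nodeSet ↑(insert b B₀) :=
      ⟨b, by rw [Finset.coe_insert]; exact Set.mem_insert b _, hwb⟩
    have hbA : b ∉ (↑A : Set E) := by
      intro hbA
      have : v ∈ Γ.nodeSet ↑A ∩ Γ.nodeSet ↑(insert b B₀) := ⟨⟨b, hbA, hvb⟩, hvB⟩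
      rw [hdisj] at this
      exact this
    have hid : (↑A ∪ ↑(insert b B₀) : Set E) \ {b} = ↑A ∪ ↑B₀ := by
      rw [Finset.coe_insert]
      ext x
      simp only [Set.mem_diff, Set.mem_union, Set.mem_insert_iff, Set.mem_singleton_iff,
        Finset.mem_coe]
      constructor
      · rintro ⟨(hx | (rfl | hx)), hxb⟩
        · exact Or.inl hx
        · exact absurd rfl hxb
        · exact Or.inr hx
      · rintro (hx | hx)
        · refine ⟨Or.inl hx, ?_⟩
          rintro rfl; exact hbA hx
        · refine ⟨Or.inr (Or.inr hx), ?_⟩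
          rintro rfl; exact hb hx
    have hid2 : (↑(insert b B₀) : Set E) \ {b} = ↑B₀ := by
      rw [Finset.coe_insert]
      apply Set.insert_diff_self_of_notMem
      exact fun h => hb (Finset.mem_coe.mp h)
    have hbig : b ∈ (↑A ∪ ↑(insert b B₀) : Set E) := by
      right; rw [Finset.coe_insert]; exact Set.mem_insert b _
    have hbins : b ∈ (↑(insert b B₀) : Set E) := by
      rw [Finset.coe_insert]; exact Set.mem_insert b _
    have hmix : Γ.nodeConn (↑A ∪ ↑B₀) v w ↔ Γ.nodeConn ↑B₀ v w := by
      constructor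
      · intro h
        exact Γ.nodeConn_mix hdisj hsubB h hvB
      · intro h
        exact Γ.nodeConn_mono Set.subset_union_right h
    by_cases hconn : Γ.nodeConn (↑B₀ : Set E) v w
    · have c1 := Γ.numComponents_sdiff_of_conn hbig hsub (by rw [hid]; exact hmix.mpr hconn)
      have c2 := Γ.numComponents_sdiff_of_conn hbins hsub (by rw [hid2]; exact hconn)
      rw [hid] at c1
      rw [hid2] at c2
      have := ih hlinks₀ hdisj₀
      omega
    · have c1 := Γ.numComponents_sdiff_of_not_conn hbig hvb hwb hsub
        (by rw [hid]; exact fun h => hconn (hmix.mp h))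
      have c2 := Γ.numComponents_sdiff_of_not_conn hbins hvb hwb hsub
        (by rw [hid2]; exact hconn)
      rw [hid] at c1
      rw [hid2] at c2
      have := ih hlinks₀ hdisj₀
      omega

theorem chain_nodeConn {D : Set E} {a b : E} (ha : a ∈ D)
    (h : Relation.ReflTransGen
      (fun x y => x ∈ D ∧ y ∈ D ∧ ∃ n : N, n ∈ Γ.ends x ∧ n ∈ Γ.ends y) a b) :
    ∀ x ∈ Γ.ends a, ∀ y ∈ Γ.ends b, Γ.nodeConn D x y := by
  induction h with
  | refl =>
    intro x hx y hy
    exact Relation.ReflTransGen.single ⟨a, ha, hx, hy⟩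
  | @tail b' c _ hrel ih =>
    intro x hx y hy
    obtain ⟨hb', hc, n, hnb', hnc⟩ := hrel
    refine Γ.nodeConn_trans (ih x hx n hnb') ?_
    exact Relation.ReflTransGen.single ⟨c, hc, hnc, hy⟩

theorem compOf_of_mem_nodesOf {D : Finset E} (hconn : Γ.ConnEdges ↑D) {v : N}
    (hv : v ∈ Γ.nodesOf D) : Γ.compOf ↑D v = ↑(Γ.nodesOf D) := by
  ext u
  simp only [Finset.mem_coe]
  constructor
  · intro h
    rcases Relation.ReflTransGen.cases_head h with rfl | ⟨c, hadj, _⟩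
    · exact hv
    · obtain ⟨g, hg, hu, _⟩ := hadj
      exact Γ.mem_nodesOf.mpr ⟨g, Finset.mem_coe.mp hg, hu⟩
  · intro hu
    obtain ⟨eu, heu, hueu⟩ := Γ.mem_nodesOf.mp hu
    obtain ⟨ev, hev, hvev⟩ := Γ.mem_nodesOf.mp hv
    have hchain := hconn eu (Finset.mem_coe.mpr heu) ev (Finset.mem_coe.mpr hev)
    exact Γ.chain_nodeConn (Finset.mem_coe.mpr heu) hchain u hueu v hvev

theorem compOf_of_not_mem_nodesOf {D : Finset E} {v : N} (hv : v ∉ Γ.nodesOf D) :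
    Γ.compOf ↑D v = {v} := by
  ext u
  simp only [Set.mem_singleton_iff]
  constructor
  · intro h
    have h' : Γ.nodeConn ↑D v u := Γ.nodeConn_symm h
    rcases Relation.ReflTransGen.cases_head h' with heq | ⟨c, hadj, _⟩
    · exact heq.symm
    · obtain ⟨g, hg, hvg, _⟩ := hadj
      exact absurd (Γ.mem_nodesOf.mpr ⟨g, Finset.mem_coe.mp hg, hvg⟩) hv
  · rintro rfl
    exact Γ.nodeConn_refl _ _

theorem numComponents_connEdges {D : Finset E} (hne : D.Nonempty)
    (hlinks : ∀ e ∈ D, Γ.IsLink e) (hconn : Γ.ConnEdges ↑D) :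
    Γ.numComponents ↑D + (Γ.nodesOf D).card = Fintype.card N + 1 := by
  classical
  obtain ⟨e₁, he₁⟩ := hne
  have hnn : 2 ≤ (Γ.nodesOf D).card := by
    have h1 : Γ.ends e₁ ⊆ Γ.nodesOf D := Γ.ends_subset_nodesOf he₁
    have := Finset.card_le_card h1
    rw [hlinks e₁ he₁] at this
    exact this
  obtain ⟨v₁, hv₁⟩ : ∃ v, v ∈ Γ.nodesOf D := by
    have : 0 < (Γ.nodesOf D).card := by omega
    obtain ⟨v, hv⟩ := Finset.card_pos.mp this
    exact ⟨v, hv⟩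
  have hrange : Set.range (Γ.compOf ↑D)
      = insert (↑(Γ.nodesOf D) : Set N)
          ((fun w => ({w} : Set N)) '' ↑((Γ.nodesOf D)ᶜ : Finset N)) := by
    ext W
    constructor
    · rintro ⟨x, rfl⟩
      by_cases hx : x ∈ Γ.nodesOf D
      · left; exact Γ.compOf_of_mem_nodesOf hconn hx
      · right
        exact ⟨x, by simpa using hx, (Γ.compOf_of_not_mem_nodesOf hx).symm⟩
    · rintro (rfl | ⟨x, hx, rfl⟩)
      · exact ⟨v₁, Γ.compOf_of_mem_nodesOf hconn hv₁⟩
      · refine ⟨x, Γ.compOf_of_not_mem_nodesOf ?_⟩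
        simpa using hx
  have hnotmem : (↑(Γ.nodesOf D) : Set N)
      ∉ (fun w => ({w} : Set N)) '' ↑((Γ.nodesOf D)ᶜ : Finset N) := by
    rintro ⟨x, _, hx⟩
    have : (Γ.nodesOf D).card = ({x} : Finset N).card := by
      congr 1
      apply Finset.coe_injective
      rw [Finset.coe_singleton]
      exact hx.symm
    rw [Finset.card_singleton] at this
    omega
  have himgcard : ((fun w => ({w} : Set N)) '' ↑((Γ.nodesOf D)ᶜ : Finset N)).ncard
      = Fintype.card N - (Γ.nodesOf D).card := by
    rw [Set.ncard_image_of_injective _ (fun a b hab => by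
      simpa [Set.singleton_eq_singleton_iff] using hab)]
    rw [Set.ncard_coe_finset, Finset.card_compl]
  have hcount : Γ.numComponents ↑D
      = 1 + (Fintype.card N - (Γ.nodesOf D).card) := by
    rw [Γ.numComponents_eq, hrange, Nat.card_coe_set_eq,
      Set.ncard_insert_of_notMem hnotmem (Set.toFinite _), himgcard]
    omega
  have hle := Finset.card_le_univ (Γ.nodesOf D)
  omega

theorem sum_degreeIn (D : Finset E) :
    ∑ v ∈ Γ.nodesOf D, Γ.degreeIn D v = ∑ e ∈ D, (Γ.ends e).card := by
  classical
  unfold degreeIn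
  have h1 : ∀ v, (D.filter (fun e => v ∈ Γ.ends e)).card
      = ∑ e ∈ D, if v ∈ Γ.ends e then 1 else 0 := by
    intro v
    exact Finset.card_filter _ D
  calc ∑ v ∈ Γ.nodesOf D, (D.filter (fun e => v ∈ Γ.ends e)).card
      = ∑ v ∈ Γ.nodesOf D, ∑ e ∈ D, if v ∈ Γ.ends e then 1 else 0 := by
        exact Finset.sum_congr rfl (fun v _ => h1 v)
    _ = ∑ e ∈ D, ∑ v ∈ Γ.nodesOf D, if v ∈ Γ.ends e then 1 else 0 := Finset.sum_comm
    _ = ∑ e ∈ D, (Γ.ends e).card := by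
        refine Finset.sum_congr rfl (fun e he => ?_)
        rw [← Finset.card_filter]
        congr 1
        ext v
        simp only [Finset.mem_filter]
        exact ⟨fun h => h.2, fun h => ⟨Γ.ends_subset_nodesOf he h, h⟩⟩

theorem sum_degreeIn_links {D : Finset E} (hlinks : ∀ e ∈ D, Γ.IsLink e) :
    ∑ v ∈ Γ.nodesOf D, Γ.degreeIn D v = 2 * D.card := by
  rw [Γ.sum_degreeIn]
  rw [Finset.sum_congr rfl (fun e he => hlinks e he), Finset.sum_const, smul_eq_mul]
  ring

theorem card_nodesOf_of_circle {C : Finset E} (h : Γ.IsCircle C) :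
    (Γ.nodesOf C).card = C.card := by
  obtain ⟨hne, hlinks, hconn, hdeg⟩ := h
  have h1 := Γ.sum_degreeIn_links hlinks
  have h2 : ∑ v ∈ Γ.nodesOf C, Γ.degreeIn C v = 2 * (Γ.nodesOf C).card := by
    rw [Finset.sum_congr rfl hdeg, Finset.sum_const, smul_eq_mul]
    ring
  omega

theorem card_nodesOf_of_path {Q : Finset E} {u v : N} (h : Γ.IsPath Q u v) :
    (Γ.nodesOf Q).card = Q.card + 1 := by
  classical
  obtain ⟨hne, huv, hlinks, hconn, hu, hv, hdu, hdv, hdeg⟩ := h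
  have h1 := Γ.sum_degreeIn_links hlinks
  have hvmem : v ∈ (Γ.nodesOf Q).erase u := Finset.mem_erase.mpr ⟨Ne.symm huv, hv⟩
  have h2 : ∑ w ∈ Γ.nodesOf Q, Γ.degreeIn Q w
      = Γ.degreeIn Q u + (Γ.degreeIn Q v
        + ∑ w ∈ ((Γ.nodesOf Q).erase u).erase v, Γ.degreeIn Q w) := by
    rw [Finset.add_sum_erase _ _ hvmem, Finset.add_sum_erase _ _ hu]
  have h3a : ∀ w ∈ ((Γ.nodesOf Q).erase u).erase v, Γ.degreeIn Q w = 2 := by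
    intro w hw
    rw [Finset.mem_erase, Finset.mem_erase] at hw
    exact hdeg w hw.2.2 hw.2.1 hw.1
  have h3 : ∑ w ∈ ((Γ.nodesOf Q).erase u).erase v, Γ.degreeIn Q w
      = 2 * (((Γ.nodesOf Q).erase u).erase v).card := by
    rw [Finset.sum_congr rfl h3a, Finset.sum_const, smul_eq_mul, Nat.mul_comm]
  have h4 : (((Γ.nodesOf Q).erase u).erase v).card = (Γ.nodesOf Q).card - 2 := by
    rw [Finset.card_erase_of_mem hvmem, Finset.card_erase_of_mem hu]
    omega
  have h5 : 2 ≤ (Γ.nodesOf Q).card := by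
    have hsub : ({u, v} : Finset N) ⊆ Γ.nodesOf Q := by
      intro x hx
      rcases Finset.mem_insert.mp hx with rfl | hx
      · exact hu
      · rw [Finset.mem_singleton] at hx
        subst hx; exact hv
    have := Finset.card_le_card hsub
    rwa [Finset.card_insert_of_notMem (by simpa using huv), Finset.card_singleton] at this
  omega

theorem connEdges_union {S T : Set E} (hS : Γ.ConnEdges S) (hT : Γ.ConnEdges T)
    {a b : E} (ha : a ∈ S) (hb : b ∈ T) {n : N} (hna : n ∈ Γ.ends a)
    (hnb : n ∈ Γ.ends b) : Γ.ConnEdges (S ∪ T) := by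
  have liftS : ∀ {e f : E}, e ∈ S → f ∈ S →
      Relation.ReflTransGen (fun x y => x ∈ S ∪ T ∧ y ∈ S ∪ T ∧
        ∃ m : N, m ∈ Γ.ends x ∧ m ∈ Γ.ends y) e f := by
    intro e f he hf
    refine Relation.ReflTransGen.mono ?_ _ _ (hS e he f hf)
    rintro x y ⟨hx, hy, m, hm⟩
    exact ⟨Or.inl hx, Or.inl hy, m, hm⟩
  have liftT : ∀ {e f : E}, e ∈ T → f ∈ T →
      Relation.ReflTransGen (fun x y => x ∈ S ∪ T ∧ y ∈ S ∪ T ∧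
        ∃ m : N, m ∈ Γ.ends x ∧ m ∈ Γ.ends y) e f := by
    intro e f he hf
    refine Relation.ReflTransGen.mono ?_ _ _ (hT e he f hf)
    rintro x y ⟨hx, hy, m, hm⟩
    exact ⟨Or.inr hx, Or.inr hy, m, hm⟩
  have hab : Relation.ReflTransGen (fun x y => x ∈ S ∪ T ∧ y ∈ S ∪ T ∧
      ∃ m : N, m ∈ Γ.ends x ∧ m ∈ Γ.ends y) a b :=
    Relation.ReflTransGen.single ⟨Or.inl ha, Or.inr hb, n, hna, hnb⟩
  intro e he f hf
  rcases he with he | he <;> rcases hf with hf | hf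
  · exact liftS he hf
  · exact ((liftS he ha).trans hab).trans (liftT hb hf)
  · refine ((liftT he hb).trans ?_).trans (liftS ha hf)
    exact Relation.ReflTransGen.single ⟨Or.inr hb, Or.inl ha, n, hnb, hna⟩
  · exact liftT he hf

theorem degreeIn_eq_zero_of_not_mem {D : Finset E} {w : N} (hw : w ∉ Γ.nodesOf D) :
    Γ.degreeIn D w = 0 := by
  unfold degreeIn
  rw [Finset.card_eq_zero, Finset.filter_eq_empty_iff]
  intro e he hwe
  exact hw (Γ.mem_nodesOf.mpr ⟨e, he, hwe⟩)

theorem degreeIn_union {Q R : Finset E} (hdisj : Disjoint Q R) (w : N) :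
    Γ.degreeIn (Q ∪ R) w = Γ.degreeIn Q w + Γ.degreeIn R w := by
  unfold degreeIn
  rw [Finset.filter_union]
  exact Finset.card_union_of_disjoint (Finset.disjoint_filter_filter hdisj)

theorem isCircle_union_paths {Q R : Finset E} {u v : N} (hQ : Γ.IsPath Q u v)
    (hR : Γ.IsPath R u v) (hdisj : Disjoint Q R)
    (hnodes : (↑(Γ.nodesOf Q) ∩ ↑(Γ.nodesOf R) : Set N) = {u, v}) :
    Γ.IsCircle (Q ∪ R) := by
  obtain ⟨hQne, huv, hQlinks, hQconn, hQu, hQv, hQdu, hQdv, hQdeg⟩ := hQ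
  obtain ⟨hRne, _, hRlinks, hRconn, hRu, hRv, hRdu, hRdv, hRdeg⟩ := hR
  obtain ⟨a, haQ, hua⟩ := Γ.mem_nodesOf.mp hQu
  obtain ⟨b, hbR, hub⟩ := Γ.mem_nodesOf.mp hRu
  refine ⟨?_, ?_, ?_, ?_⟩
  · exact hQne.mono Finset.subset_union_left
  · intro e he
    rcases Finset.mem_union.mp he with he | he
    · exact hQlinks e he
    · exact hRlinks e he
  · rw [Finset.coe_union]
    exact Γ.connEdges_union hQconn hRconn (Finset.mem_coe.mpr haQ)
      (Finset.mem_coe.mpr hbR) hua hub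
  · intro w hw
    rw [Γ.degreeIn_union hdisj]
    rw [Γ.nodesOf_union, Finset.mem_union] at hw
    rcases eq_or_ne w u with rfl | hwu
    · rw [hQdu, hRdu]
    rcases eq_or_ne w v with rfl | hwv
    · rw [hQdv, hRdv]
    rcases hw with hw | hw
    · have hwR : w ∉ Γ.nodesOf R := by
        intro hcon
        have : w ∈ (↑(Γ.nodesOf Q) ∩ ↑(Γ.nodesOf R) : Set N) :=
          ⟨Finset.mem_coe.mpr hw, Finset.mem_coe.mpr hcon⟩
        rw [hnodes] at this
        rcases this with rfl | h
        · exact hwu rfl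
        · exact hwv (Set.mem_singleton_iff.mp h)
      rw [hQdeg w hw hwu hwv, Γ.degreeIn_eq_zero_of_not_mem hwR]
    · have hwQ : w ∉ Γ.nodesOf Q := by
        intro hcon
        have : w ∈ (↑(Γ.nodesOf Q) ∩ ↑(Γ.nodesOf R) : Set N) :=
          ⟨Finset.mem_coe.mpr hcon, Finset.mem_coe.mpr hw⟩
        rw [hnodes] at this
        rcases this with rfl | h
        · exact hwu rfl
        · exact hwv (Set.mem_singleton_iff.mp h)
      rw [hRdeg w hw hwu hwv, Γ.degreeIn_eq_zero_of_not_mem hwQ]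

end MGraph

namespace MGraph

variable {N : Type*} {E₁ E₂ : Type*}

section Transfer

variable (Γ : MGraph N E₁) (Δ : MGraph N E₂) (π : E₁ → E₂)

theorem nodesOf_image (hends : ∀ e : E₁, Γ.ends e = Δ.ends (π e)) (C : Finset E₁) :
    Δ.nodesOf (C.image π) = Γ.nodesOf C := by
  classical
  unfold nodesOf
  rw [Finset.image_biUnion]
  exact Finset.biUnion_congr rfl (fun e _ => (hends e).symm)

theorem degreeIn_image (hends : ∀ e : E₁, Γ.ends e = Δ.ends (π e)) {C : Finset E₁} (hinj : Set.InjOn π ↑C) (v : N) :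
    Δ.degreeIn (C.image π) v = Γ.degreeIn C v := by
  classical
  unfold degreeIn
  rw [Finset.filter_image]
  rw [Finset.card_image_of_injOn (hinj.mono (by
    intro x hx
    exact Finset.mem_coe.mpr (Finset.mem_of_mem_filter x (Finset.mem_coe.mp hx))))]
  congr 1
  apply Finset.filter_congr
  intro e _
  rw [← hends e]

theorem connEdges_image (hends : ∀ e : E₁, Γ.ends e = Δ.ends (π e)) {C : Finset E₁} (hconn : Γ.ConnEdges ↑C) :
    Δ.ConnEdges ↑(C.image π) := by
  classical
  intro e' he' f' hf'
  rw [Finset.mem_coe, Finset.mem_image] at he' hf'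
  obtain ⟨e, he, rfl⟩ := he'
  obtain ⟨f, hf, rfl⟩ := hf'
  refine Relation.ReflTransGen.lift π ?_ _ _ (hconn e (Finset.mem_coe.mpr he) f (Finset.mem_coe.mpr hf))
  rintro a b ⟨ha, hb, n, hna, hnb⟩
  refine ⟨?_, ?_, n, ?_, ?_⟩
  · exact Finset.mem_coe.mpr (Finset.mem_image_of_mem π (Finset.mem_coe.mp ha))
  · exact Finset.mem_coe.mpr (Finset.mem_image_of_mem π (Finset.mem_coe.mp hb))
  · rw [← hends a]; exact hna
  · rw [← hends b]; exact hnb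

theorem connEdges_of_image (hends : ∀ e : E₁, Γ.ends e = Δ.ends (π e)) {C : Finset E₁} (hinj : Set.InjOn π ↑C)
    (hconn : Δ.ConnEdges ↑(C.image π)) : Γ.ConnEdges ↑C := by
  classical
  have key : ∀ (b : E₁), b ∈ C → ∀ (x : E₂),
      Relation.ReflTransGen (fun s t => s ∈ (↑(C.image π) : Set E₂) ∧
        t ∈ (↑(C.image π) : Set E₂) ∧ ∃ n : N, n ∈ Δ.ends s ∧ n ∈ Δ.ends t) x (π b) →
      ∀ a ∈ C, π a = x →
      Relation.ReflTransGen (fun s t => s ∈ (↑C : Set E₁) ∧ t ∈ (↑C : Set E₁) ∧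
        ∃ n : N, n ∈ Γ.ends s ∧ n ∈ Γ.ends t) a b := by
    intro b hb x h
    induction h using Relation.ReflTransGen.head_induction_on with
    | refl =>
      intro a ha hab
      have : a = b := hinj (Finset.mem_coe.mpr ha) (Finset.mem_coe.mpr hb) hab
      subst this
      exact Relation.ReflTransGen.refl
    | @head s t hst _ ih =>
      intro a ha has
      obtain ⟨hs, ht, n, hns, hnt⟩ := hst
      rw [Finset.mem_coe, Finset.mem_image] at ht
      obtain ⟨a', ha', ha't⟩ := ht
      refine Relation.ReflTransGen.head ?_ (ih a' ha' ha't)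
      refine ⟨Finset.mem_coe.mpr ha, Finset.mem_coe.mpr ha', n, ?_, ?_⟩
      · rw [hends a, has]; exact hns
      · rw [hends a', ha't]; exact hnt
  intro e he f hf
  rw [Finset.mem_coe] at he hf
  exact key f hf (π e) (hconn (π e)
    (Finset.mem_coe.mpr (Finset.mem_image_of_mem π he)) (π f)
    (Finset.mem_coe.mpr (Finset.mem_image_of_mem π hf))) e he rfl

theorem isCircle_image (hends : ∀ e : E₁, Γ.ends e = Δ.ends (π e)) {C : Finset E₁} (hinj : Set.InjOn π ↑C) (h : Γ.IsCircle C) :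
    Δ.IsCircle (C.image π) := by
  classical
  obtain ⟨hne, hlinks, hconn, hdeg⟩ := h
  refine ⟨hne.image π, ?_, Γ.connEdges_image Δ π hends hconn, ?_⟩
  · intro e' he'
    rw [Finset.mem_image] at he'
    obtain ⟨e, he, rfl⟩ := he'
    unfold IsLink
    rw [← hends e]
    exact hlinks e he
  · intro v hv
    rw [Γ.nodesOf_image Δ π hends] at hv
    rw [Γ.degreeIn_image Δ π hends hinj]
    exact hdeg v hv

theorem isCircle_of_image (hends : ∀ e : E₁, Γ.ends e = Δ.ends (π e)) {C : Finset E₁} (hinj : Set.InjOn π ↑C)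
    (h : Δ.IsCircle (C.image π)) : Γ.IsCircle C := by
  classical
  obtain ⟨hne, hlinks, hconn, hdeg⟩ := h
  refine ⟨?_, ?_, Γ.connEdges_of_image Δ π hends hinj hconn, ?_⟩
  · obtain ⟨e', he'⟩ := hne
    rw [Finset.mem_image] at he'
    obtain ⟨e, he, _⟩ := he'
    exact ⟨e, he⟩
  · intro e he
    unfold IsLink
    rw [hends e]
    exact hlinks (π e) (Finset.mem_image_of_mem π he)
  · intro v hv
    rw [← Γ.nodesOf_image Δ π hends] at hv
    rw [← Γ.degreeIn_image Δ π hends hinj]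
    exact hdeg v hv

end Transfer

variable (Γ : MGraph N E₁)

theorem isCircle_pair {e e' : E₁} (hne : e ≠ e') (hendseq : Γ.ends e = Γ.ends e')
    (hlink : Γ.IsLink e) : Γ.IsCircle ({e, e'} : Finset E₁) := by
  classical
  have hlink' : Γ.IsLink e' := by unfold IsLink; rw [← hendseq]; exact hlink
  obtain ⟨n, hn⟩ : ∃ n, n ∈ Γ.ends e := by
    have : 0 < (Γ.ends e).card := by rw [hlink]; omega
    exact Finset.card_pos.mp this
  have hmem : ∀ x ∈ ({e, e'} : Finset E₁), Γ.ends x = Γ.ends e := by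
    intro x hx
    rcases Finset.mem_insert.mp hx with rfl | hx
    · rfl
    · rw [Finset.mem_singleton] at hx; subst hx; exact hendseq.symm
  refine ⟨⟨e, Finset.mem_insert_self e {e'}⟩, ?_, ?_, ?_⟩
  · intro x hx
    unfold IsLink
    rw [hmem x hx]
    exact hlink
  · intro x hx y hy
    refine Relation.ReflTransGen.single ⟨hx, hy, n, ?_, ?_⟩
    · rw [hmem x (Finset.mem_coe.mp hx)]; exact hn
    · rw [hmem y (Finset.mem_coe.mp hy)]; exact hn
  · intro v hv
    have hvends : v ∈ Γ.ends e := by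
      obtain ⟨x, hx, hvx⟩ := Γ.mem_nodesOf.mp hv
      rw [hmem x hx] at hvx
      exact hvx
    unfold degreeIn
    have : ({e, e'} : Finset E₁).filter (fun x => v ∈ Γ.ends x) = {e, e'} := by
      apply Finset.filter_true_of_mem
      intro x hx
      rw [hmem x hx]
      exact hvends
    rw [this, Finset.card_insert_of_notMem (by simpa using hne), Finset.card_singleton]

variable [Fintype N]

theorem numComponents_add_card_ge (S : Finset E₁) (hlinks : ∀ e ∈ S, Γ.IsLink e) :
    Fintype.card N ≤ Γ.numComponents ↑S + S.card := by
  classical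
  induction S using Finset.induction_on with
  | empty =>
    rw [Finset.coe_empty, Γ.numComponents_empty]
    simp
  | @insert b S₀ hb ih =>
    have hlinks₀ : ∀ e ∈ S₀, Γ.IsLink e := fun e he => hlinks e (Finset.mem_insert_of_mem he)
    obtain ⟨v, w, hvw, hends⟩ := Finset.card_eq_two.mp (hlinks b (Finset.mem_insert_self b S₀))
    have hsub : ∀ x ∈ Γ.ends b, x = v ∨ x = w := by
      intro x hx
      rw [hends, Finset.mem_insert, Finset.mem_singleton] at hx
      exact hx
    have hid : (↑(insert b S₀) : Set E₁) \ {b} = ↑S₀ := by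
      rw [Finset.coe_insert]
      apply Set.insert_diff_self_of_notMem
      exact fun h => hb (Finset.mem_coe.mp h)
    have h1 : Γ.numComponents ↑S₀ ≤ Γ.numComponents ↑(insert b S₀) + 1 := by
      have := Γ.numComponents_sdiff_le (S := (↑(insert b S₀) : Set E₁)) (e := b) hsub
      rw [hid] at this
      exact this
    have h2 := ih hlinks₀
    rw [Finset.card_insert_of_notMem hb]
    omega

theorem isCircle_of_minimal_dependent {D : Finset E₁} (hne : D.Nonempty)
    (hlinks : ∀ e ∈ D, Γ.IsLink e)
    (hcard : Γ.numComponents ↑D + D.card = Fintype.card N + 1)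
    (hindep : ∀ A : Finset E₁, A ⊂ D → Γ.numComponents ↑A + A.card = Fintype.card N) :
    Γ.IsCircle D := by
  classical
  -- step 1: minimum degree two
  have hdeg2 : ∀ v ∈ Γ.nodesOf D, 2 ≤ Γ.degreeIn D v := by
    intro v hv
    obtain ⟨e, he, hve⟩ := Γ.mem_nodesOf.mp hv
    have hefil : e ∈ D.filter (fun g => v ∈ Γ.ends g) := Finset.mem_filter.mpr ⟨he, hve⟩
    have hpos : 1 ≤ Γ.degreeIn D v := by
      unfold degreeIn
      exact Finset.card_pos.mpr ⟨e, hefil⟩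
    by_contra hlt
    have hdeg1 : Γ.degreeIn D v = 1 := by unfold degreeIn at *; omega
    have hfil : D.filter (fun g => v ∈ Γ.ends g) = {e} := by
      obtain ⟨x, hx⟩ := Finset.card_eq_one.mp hdeg1
      rw [hx] at hefil
      rw [Finset.mem_singleton] at hefil
      rw [hx, hefil]
    obtain ⟨x, y, hxy, hends⟩ := Finset.card_eq_two.mp (hlinks e he)
    obtain ⟨w, hwv, hendsvw⟩ : ∃ w, w ≠ v ∧ Γ.ends e = {v, w} := by
      have hvxy : v = x ∨ v = y := by
        have := hve
        rw [hends, Finset.mem_insert, Finset.mem_singleton] at this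
        exact this
      rcases hvxy with rfl | rfl
      · exact ⟨y, fun h => hxy h.symm, hends⟩
      · refine ⟨x, fun h => hxy h, by rw [hends]; ext z; simp; tauto⟩
    have hsub : ∀ z ∈ Γ.ends e, z = v ∨ z = w := by
      intro z hz
      rw [hendsvw, Finset.mem_insert, Finset.mem_singleton] at hz
      exact hz
    have herase : Γ.numComponents ↑(D.erase e) = Γ.numComponents ↑D := by
      have h1 := hindep (D.erase e) (Finset.erase_ssubset he)
      have h2 : (D.erase e).card + 1 = D.card := Finset.card_erase_add_one he
      omega
    have hcoe : (↑D : Set E₁) \ {e} = ↑(D.erase e) := by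
      rw [Finset.coe_erase]
    have hconn : Γ.nodeConn ((↑D : Set E₁) \ {e}) v w := by
      by_contra hnc
      have := Γ.numComponents_lt_of_bridge (Finset.mem_coe.mpr he)
        (by rw [hendsvw]; exact Finset.mem_insert_self v {w})
        (by rw [hendsvw]; exact Finset.mem_insert_of_mem (Finset.mem_singleton_self w)) hnc
      rw [hcoe, herase] at this
      omega
    -- but v is isolated in D \ {e}
    rcases Relation.ReflTransGen.cases_head hconn with heq | ⟨c, hadj, _⟩
    · exact hwv heq.symm
    · obtain ⟨g, hg, hvg, _⟩ := hadj
      have hgD : g ∈ D := Finset.mem_coe.mp hg.1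
      have hgfil : g ∈ D.filter (fun g' => v ∈ Γ.ends g') := Finset.mem_filter.mpr ⟨hgD, hvg⟩
      rw [hfil, Finset.mem_singleton] at hgfil
      subst hgfil
      exact hg.2 rfl
  -- step 2: connectivity
  have hconn : Γ.ConnEdges ↑D := by
    by_contra hnc
    unfold ConnEdges at hnc
    push_neg at hnc
    obtain ⟨estar, hestar, fstar, hfstar, hnochain⟩ := hnc
    set rel : E₁ → E₁ → Prop := fun s t => s ∈ (↑D : Set E₁) ∧ t ∈ (↑D : Set E₁) ∧
      ∃ n : N, n ∈ Γ.ends s ∧ n ∈ Γ.ends t with hrel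
    set A : Finset E₁ := D.filter (fun a => Relation.ReflTransGen rel estar a) with hA
    set B : Finset E₁ := D \ A with hB
    have heA : estar ∈ A := Finset.mem_filter.mpr ⟨Finset.mem_coe.mp hestar,
      Relation.ReflTransGen.refl⟩
    have hfB : fstar ∈ B := by
      rw [hB, Finset.mem_sdiff]
      refine ⟨Finset.mem_coe.mp hfstar, ?_⟩
      intro hcon
      exact hnochain (Finset.mem_filter.mp hcon).2
    have hAD : A ⊆ D := Finset.filter_subset _ D
    have hBD : B ⊆ D := Finset.sdiff_subset
    have hdisj : Γ.nodeSet ↑A ∩ Γ.nodeSet ↑B = ∅ := by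
      ext v
      simp only [Set.mem_inter_iff, Set.mem_empty_iff_false, iff_false]
      rintro ⟨⟨a, haA, hva⟩, ⟨b, hbB, hvb⟩⟩
      have haA' : a ∈ A := Finset.mem_coe.mp haA
      have hbB' : b ∈ B := Finset.mem_coe.mp hbB
      have hchain : Relation.ReflTransGen rel estar a := (Finset.mem_filter.mp haA').2
      have hstep : rel a b := by
        refine ⟨Finset.mem_coe.mpr (hAD haA'), Finset.mem_coe.mpr (hBD hbB'), v, hva, hvb⟩
      have : b ∈ A := Finset.mem_filter.mpr ⟨hBD hbB', hchain.tail hstep⟩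
      rw [hB, Finset.mem_sdiff] at hbB'
      exact hbB'.2 this
    have hABD : A ∪ B = D := Finset.union_sdiff_of_subset hAD
    have hAss : A ⊂ D := by
      refine Finset.ssubset_iff_of_subset hAD |>.mpr ⟨fstar, hBD hfB, ?_⟩
      rw [hB, Finset.mem_sdiff] at hfB
      exact hfB.2
    have hBss : B ⊂ D := by
      refine Finset.ssubset_iff_of_subset hBD |>.mpr ⟨estar, hAD heA, ?_⟩
      rw [hB, Finset.mem_sdiff]
      push_neg
      intro _
      exact heA
    have hiA := hindep A hAss
    have hiB := hindep B hBss
    have hadd := Γ.numComponents_union_add A B (fun e he => hlinks e (hBD he)) hdisj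
    have hcoe : (↑A ∪ ↑B : Set E₁) = ↑D := by
      rw [← Finset.coe_union, hABD]
    rw [hcoe] at hadd
    have hcards : A.card + B.card = D.card := by
      rw [hB]
      have := Finset.card_sdiff_add_card_eq_card hAD
      omega
    omega
  -- step 3: node count and exact degrees
  have hcount := Γ.numComponents_connEdges hne hlinks hconn
  have hnodes : (Γ.nodesOf D).card = D.card := by omega
  have hsum := Γ.sum_degreeIn_links hlinks
  refine ⟨hne, hlinks, hconn, ?_⟩
  intro v hv
  have hub : Γ.degreeIn D v + 2 * ((Γ.nodesOf D).erase v).card ≤ 2 * D.card := by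
    have hsplit : Γ.degreeIn D v + ∑ w ∈ (Γ.nodesOf D).erase v, Γ.degreeIn D w
        = ∑ w ∈ Γ.nodesOf D, Γ.degreeIn D w := Finset.add_sum_erase _ _ hv
    have hlow : 2 * ((Γ.nodesOf D).erase v).card
        ≤ ∑ w ∈ (Γ.nodesOf D).erase v, Γ.degreeIn D w := by
      calc 2 * ((Γ.nodesOf D).erase v).card
          = ∑ _w ∈ (Γ.nodesOf D).erase v, 2 := by
            rw [Finset.sum_const, smul_eq_mul, Nat.mul_comm]
        _ ≤ ∑ w ∈ (Γ.nodesOf D).erase v, Γ.degreeIn D w :=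
            Finset.sum_le_sum (fun w hw => hdeg2 w (Finset.mem_of_mem_erase hw))
    omega
  have herase : ((Γ.nodesOf D).erase v).card = (Γ.nodesOf D).card - 1 :=
    Finset.card_erase_of_mem hv
  have hpos : 1 ≤ (Γ.nodesOf D).card := Finset.card_pos.mpr ⟨v, hv⟩
  have := hdeg2 v hv
  omega

end MGraph

/-! ## The orthographic construction: projection lemmas -/

namespace ProjGeom

variable {P N E' : Type*} (G : ProjGeom P)
variable (P' : Set P) (Δ : MGraph N E') (z' : E' → P) (e₀ : P) (Ehat : Set P)
variable (hE : ∀ x ∈ Ehat, ∃ f : E', x ∈ G.line (z' f) e₀)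

theorem orthoProj_spec (e : ↥Ehat) :
    (e : P) ∈ G.line (z' (G.orthoProj z' e₀ Ehat hE e)) e₀ :=
  (hE e e.2).choose_spec

theorem orthoGraph_ends (e : ↥Ehat) :
    (G.orthoGraph Δ z' e₀ Ehat hE).ends e = Δ.ends (G.orthoProj z' e₀ Ehat hE e) := rfl

section Proj

variable (hP' : G.IsHyperplane P') (hz'mem : ∀ f : E', z' f ∈ P') (he₀ : e₀ ∉ P')
variable (hne : e₀ ∉ Ehat)

theorem zp_ne_e₀ (hP' : G.IsHyperplane P') (hz'mem : ∀ f : E', z' f ∈ P')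
    (he₀ : e₀ ∉ P') (f : E') : z' f ≠ e₀ := by
  intro h
  exact he₀ (h ▸ hz'mem f)

theorem coe_ne_e₀ (hne : e₀ ∉ Ehat) (e : ↥Ehat) : (e : P) ≠ e₀ := by
  intro h
  exact hne (h ▸ e.2)

/-- The point of an edge of `Δ` lies in the span of an edge point and `e₀`. -/
theorem zp_mem_span (hP' : G.IsHyperplane P') (hz'mem : ∀ f : E', z' f ∈ P')
    (he₀ : e₀ ∉ P') (hne : e₀ ∉ Ehat) (e : ↥Ehat) :
    z' (G.orthoProj z' e₀ Ehat hE e) ∈ G.span {(e : P), e₀} := by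
  set f := G.orthoProj z' e₀ Ehat hE e with hf
  have hspec := G.orthoProj_spec z' e₀ Ehat hE e
  rcases eq_or_ne (e : P) (z' f) with heq | hnz
  · rw [← heq]
    exact G.subset_span _ (by simp)
  · have hline : G.line (e : P) e₀ = G.line (z' f) e₀ :=
      G.line_unique (z' f) e₀ (e : P) e₀ (G.zp_ne_e₀ P' z' e₀ hP' hz'mem he₀ f) hspec
        (G.right_mem_line _ _) (coe_ne_e₀ e₀ Ehat hne e)
    apply G.mem_span_pair (a := (e : P)) (b := e₀)
    rw [hline]
    exact G.left_mem_line _ _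

theorem coe_mem_span (e : ↥Ehat) :
    (e : P) ∈ G.span {z' (G.orthoProj z' e₀ Ehat hE e), e₀} :=
  G.mem_span_pair (G.orthoProj_spec z' e₀ Ehat hE e)

/-- Parallel edge points span `e₀`. -/
theorem parallel_span (hP' : G.IsHyperplane P') (hz'mem : ∀ f : E', z' f ∈ P')
    (he₀ : e₀ ∉ P') {e e' : ↥Ehat}
    (hpar : G.orthoProj z' e₀ Ehat hE e = G.orthoProj z' e₀ Ehat hE e')
    (hnee : e ≠ e') : e₀ ∈ G.span {(e : P), (e' : P)} := by
  set f := G.orthoProj z' e₀ Ehat hE e with hf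
  have hspec := G.orthoProj_spec z' e₀ Ehat hE e
  have hspec' := G.orthoProj_spec z' e₀ Ehat hE e'
  rw [← hpar] at hspec'
  have hvalne : (e : P) ≠ (e' : P) := fun h => hnee (Subtype.coe_injective h)
  have hline : G.line (e : P) (e' : P) = G.line (z' f) e₀ :=
    G.line_unique (z' f) e₀ (e : P) (e' : P) (G.zp_ne_e₀ P' z' e₀ hP' hz'mem he₀ f)
      hspec hspec' hvalne
  apply G.mem_span_pair (a := (e : P)) (b := (e' : P))
  rw [hline]
  exact G.right_mem_line _ _

/-- Key span identity: the span of the edge points together with `e₀` equals the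
span of the corresponding points of `Δ` together with `e₀`. -/
theorem span_insert_eq (hP' : G.IsHyperplane P') (hz'mem : ∀ f : E', z' f ∈ P')
    (he₀ : e₀ ∉ P') (hne : e₀ ∉ Ehat) (SE : Finset ↥Ehat) :
    G.span ↑(insert e₀ (SE.image (Subtype.val : ↥Ehat → P)))
      = G.span ↑(insert e₀ ((SE.image (G.orthoProj z' e₀ Ehat hE)).image z')) := by
  classical
  apply Set.Subset.antisymm
  · apply G.span_le (G.isFlat_span _)
    intro x hx
    rw [Finset.coe_insert] at hx
    rcases hx with rfl | hx
    · exact G.subset_span _ (by rw [Finset.coe_insert]; exact Set.mem_insert _ _)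
    · rw [Finset.mem_coe, Finset.mem_image] at hx
      obtain ⟨e, he, rfl⟩ := hx
      have h1 := G.coe_mem_span z' e₀ Ehat hE e
      refine G.span_mono ?_ h1
      intro y hy
      rcases hy with rfl | hy
      · rw [Finset.coe_insert]
        right
        rw [Finset.mem_coe, Finset.mem_image]
        exact ⟨G.orthoProj z' e₀ Ehat hE e, Finset.mem_image_of_mem _ he, rfl⟩
      · rw [Set.mem_singleton_iff] at hy
        subst hy
        rw [Finset.coe_insert]
        exact Set.mem_insert _ _
  · apply G.span_le (G.isFlat_span _)
    intro x hx
    rw [Finset.coe_insert] at hx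
    rcases hx with rfl | hx
    · exact G.subset_span _ (by rw [Finset.coe_insert]; exact Set.mem_insert _ _)
    · rw [Finset.mem_coe, Finset.mem_image] at hx
      obtain ⟨g, hg, rfl⟩ := hx
      rw [Finset.mem_image] at hg
      obtain ⟨e, he, rfl⟩ := hg
      have h1 := G.zp_mem_span P' z' e₀ Ehat hE hP' hz'mem he₀ hne e
      refine G.span_mono ?_ h1
      intro y hy
      rcases hy with rfl | hy
      · rw [Finset.coe_insert]
        right
        rw [Finset.mem_coe, Finset.mem_image]
        exact ⟨e, he, rfl⟩
      · rw [Set.mem_singleton_iff] at hy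
        subst hy
        rw [Finset.coe_insert]
        exact Set.mem_insert _ _

theorem e₀_not_mem_span_image (hP' : G.IsHyperplane P') (hz'mem : ∀ f : E', z' f ∈ P')
    (he₀ : e₀ ∉ P') (F : Finset E') : e₀ ∉ G.span ↑(F.image z') := by
  intro hmem
  apply he₀
  refine G.span_le hP'.1 ?_ hmem
  intro x hx
  rw [Finset.mem_coe, Finset.mem_image] at hx
  obtain ⟨f, _, rfl⟩ := hx
  exact hz'mem f

variable [Fintype N]

/-- The master rank formula. -/
theorem rank_insert_e₀ (hP' : G.IsHyperplane P') (hz'mem : ∀ f : E', z' f ∈ P')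
    (he₀ : e₀ ∉ P') (hne : e₀ ∉ Ehat)
    (hz'rep : ∀ S : Finset E', Δ.graphicRk (↑S : Set E') = G.rank (z' '' ↑S))
    (SE : Finset ↥Ehat) :
    G.rank ↑(insert e₀ (SE.image (Subtype.val : ↥Ehat → P)))
      = Δ.graphicRk (↑(SE.image (G.orthoProj z' e₀ Ehat hE)) : Set E') + 1 := by
  classical
  set F : Finset E' := SE.image (G.orthoProj z' e₀ Ehat hE) with hF
  have h1 : G.rank ↑(insert e₀ (SE.image (Subtype.val : ↥Ehat → P)))
      = G.rank ↑(insert e₀ (F.image z')) :=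
    G.rank_eq_of_span_eq (G.span_insert_eq P' z' e₀ Ehat hE hP' hz'mem he₀ hne SE)
  have h2 : G.rank ↑(insert e₀ (F.image z')) = G.rank ↑(F.image z') + 1 :=
    G.rank_insert_of_not_mem_span (G.e₀_not_mem_span_image P' z' e₀ hP' hz'mem he₀ F)
  have h3 : Δ.graphicRk (↑F : Set E') = G.rank ↑(F.image z') := by
    have hcoe : (z' '' (↑F : Set E')) = ↑(F.image z') := (Finset.coe_image).symm
    rw [hz'rep F, hcoe]
  rw [h1, h2, ← h3]

/-- Components transfer along the projection. -/
theorem numComponents_transfer (X : Finset ↥Ehat) :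
    (G.orthoGraph Δ z' e₀ Ehat hE).numComponents ↑X
      = Δ.numComponents (↑(X.image (G.orthoProj z' e₀ Ehat hE)) : Set E') := by
  classical
  set Γ := G.orthoGraph Δ z' e₀ Ehat hE with hΓ
  set π := G.orthoProj z' e₀ Ehat hE with hπ
  have hadj : ∀ u v : N, Γ.adjIn ↑X u v ↔ Δ.adjIn (↑(X.image π) : Set E') u v := by
    intro u v
    constructor
    · rintro ⟨e, he, hu, hv⟩
      exact ⟨π e, Finset.mem_coe.mpr (Finset.mem_image_of_mem π (Finset.mem_coe.mp he)),
        hu, hv⟩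
    · rintro ⟨f, hf, hu, hv⟩
      rw [Finset.mem_coe, Finset.mem_image] at hf
      obtain ⟨e, he, rfl⟩ := hf
      exact ⟨e, Finset.mem_coe.mpr he, hu, hv⟩
  have hcomp : Γ.compOf ↑X = Δ.compOf (↑(X.image π) : Set E') := by
    funext v
    ext u
    show Γ.nodeConn ↑X u v ↔ Δ.nodeConn (↑(X.image π) : Set E') u v
    unfold MGraph.nodeConn
    constructor
    · intro h
      refine Relation.ReflTransGen.mono ?_ _ _ h
      intro a b hab
      exact (hadj a b).mp hab
    · intro h
      refine Relation.ReflTransGen.mono ?_ _ _ h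
      intro a b hab
      exact (hadj a b).mpr hab
  rw [Γ.numComponents_eq, Δ.numComponents_eq, hcomp]

end Proj

end ProjGeom

/-! ## The balanced-set lemma -/

namespace ProjGeom

variable {P N E' : Type*} (G : ProjGeom P)
variable (P' : Set P) (Δ : MGraph N E') (z' : E' → P) (e₀ : P) (Ehat : Set P)
variable (hE : ∀ x ∈ Ehat, ∃ f : E', x ∈ G.line (z' f) e₀)
variable [Fintype N]

theorem balanced_not_spans (hP' : G.IsHyperplane P') (hΔ : Δ.IsSimple)
    (hz'mem : ∀ f : E', z' f ∈ P')
    (hz'rep : ∀ S : Finset E', Δ.graphicRk (↑S : Set E') = G.rank (z' '' ↑S))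
    (he₀ : e₀ ∉ P') (hne : e₀ ∉ Ehat) (SE : Finset ↥Ehat)
    (hbal : (G.orthoGraph Δ z' e₀ Ehat hE).IsBalancedSet (G.orthoBal Δ z' e₀ Ehat hE) ↑SE)
    (hsp : e₀ ∈ G.span ↑(SE.image (Subtype.val : ↥Ehat → P))) : False := by
  classical
  set Γ := G.orthoGraph Δ z' e₀ Ehat hE with hΓ
  set π := G.orthoProj z' e₀ Ehat hE with hπ
  have hends : ∀ e : ↥Ehat, Γ.ends e = Δ.ends (π e) := fun _ => rfl
  have hΓlink : ∀ e : ↥Ehat, Γ.IsLink e := fun e => hΔ.1 (π e)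
  by_cases hinj : Set.InjOn π ↑SE
  · -- the projection is injective on SE
    obtain ⟨SE₀, hSE₀T, hminT⟩ := Finset.exists_min_image
      (SE.powerset.filter
        (fun T => e₀ ∈ G.span ↑(T.image (Subtype.val : ↥Ehat → P)))) Finset.card
      ⟨SE, Finset.mem_filter.mpr ⟨Finset.mem_powerset_self SE, hsp⟩⟩
    have hsub₀ : SE₀ ⊆ SE := Finset.mem_powerset.mp (Finset.mem_filter.mp hSE₀T).1
    have hsp₀ : e₀ ∈ G.span ↑(SE₀.image (Subtype.val : ↥Ehat → P)) :=
      (Finset.mem_filter.mp hSE₀T).2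
    have hindep₀ : G.Indep ↑(SE₀.image (Subtype.val : ↥Ehat → P)) := by
      intro a ha hsp'
      rw [Finset.mem_coe, Finset.mem_image] at ha
      obtain ⟨x, hx, rfl⟩ := ha
      have himgerase : (↑(SE₀.image (Subtype.val : ↥Ehat → P)) : Set P) \ {(x : P)}
          = ↑((SE₀.erase x).image (Subtype.val : ↥Ehat → P)) := by
        rw [Finset.image_erase Subtype.coe_injective, Finset.coe_erase]
      rw [himgerase] at hsp'
      have hall : (↑(SE₀.image (Subtype.val : ↥Ehat → P)) : Set P)
          ⊆ G.span ↑((SE₀.erase x).image (Subtype.val : ↥Ehat → P)) := by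
        intro y hy
        rw [Finset.mem_coe, Finset.mem_image] at hy
        obtain ⟨z, hz, rfl⟩ := hy
        rcases eq_or_ne z x with rfl | hzx
        · exact hsp'
        · exact G.subset_span _ (Finset.mem_coe.mpr
            (Finset.mem_image_of_mem _ (Finset.mem_erase.mpr ⟨hzx, hz⟩)))
      have he₀' : e₀ ∈ G.span ↑((SE₀.erase x).image (Subtype.val : ↥Ehat → P)) :=
        G.span_le_span hall hsp₀
      have hmem : SE₀.erase x ∈ SE.powerset.filter
          (fun T => e₀ ∈ G.span ↑(T.image (Subtype.val : ↥Ehat → P))) :=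
        Finset.mem_filter.mpr ⟨Finset.mem_powerset.mpr ((Finset.erase_subset x SE₀).trans hsub₀),
          he₀'⟩
      have := hminT _ hmem
      have := Finset.card_erase_lt_of_mem hx
      omega
    have hrank₀ : G.rank ↑(SE₀.image (Subtype.val : ↥Ehat → P)) = SE₀.card := by
      rw [G.rank_indep hindep₀, Finset.card_image_of_injOn Subtype.coe_injective.injOn]
    have hrins : G.rank ↑(insert e₀ (SE₀.image (Subtype.val : ↥Ehat → P))) = SE₀.card := by
      rw [G.rank_insert_of_mem_span hsp₀, hrank₀]
    have hrins2 := G.rank_insert_e₀ P' Δ z' e₀ Ehat hE hP' hz'mem he₀ hne hz'rep SE₀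
    set F₀ : Finset E' := SE₀.image π with hF₀
    have hinj₀ : Set.InjOn π ↑SE₀ := hinj.mono (Finset.coe_subset.mpr hsub₀)
    have hcardF₀ : F₀.card = SE₀.card := Finset.card_image_of_injOn hinj₀
    have hgF₀ : Δ.graphicRk (↑F₀ : Set E') + 1 = F₀.card := by
      rw [hcardF₀, ← hrins, hrins2]
    have hdepF₀ : Δ.graphicRk (↑F₀ : Set E') < F₀.card := by omega
    -- a minimal dependent subset of F₀
    obtain ⟨D, hDU, hminU⟩ := Finset.exists_min_image
      (F₀.powerset.filter (fun (X : Finset E') => Δ.graphicRk ↑X < X.card)) Finset.card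
      ⟨F₀, Finset.mem_filter.mpr ⟨Finset.mem_powerset_self F₀, hdepF₀⟩⟩
    have hDF₀ : D ⊆ F₀ := Finset.mem_powerset.mp (Finset.mem_filter.mp hDU).1
    have hDdep : Δ.graphicRk (↑D : Set E') < D.card := (Finset.mem_filter.mp hDU).2
    have hgrk : ∀ X : Finset E', Δ.graphicRk (↑X : Set E')
        = Fintype.card N - Δ.numComponents ↑X := fun X => rfl
    have hDne : D.Nonempty := by
      rw [Finset.nonempty_iff_ne_empty]
      rintro rfl
      rw [hgrk] at hDdep
      have h1 : Δ.numComponents (↑(∅ : Finset E') : Set E') = Fintype.card N := by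
        rw [Finset.coe_empty, Δ.numComponents_empty]
      rw [h1] at hDdep
      simp at hDdep
    have hindepD : ∀ A : Finset E', A ⊂ D →
        Δ.numComponents ↑A + A.card = Fintype.card N := by
      intro A hA
      have hnotdep : ¬ (Δ.graphicRk (↑A : Set E') < A.card) := by
        intro hdep
        have hmem : A ∈ F₀.powerset.filter
            (fun (X : Finset E') => Δ.graphicRk ↑X < X.card) :=
          Finset.mem_filter.mpr ⟨Finset.mem_powerset.mpr (hA.subset.trans hDF₀), hdep⟩
        have h1 := hminU _ hmem
        have h2 := Finset.card_lt_card hA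
        omega
      have hle := Δ.numComponents_le (↑A : Set E')
      have hge := Δ.numComponents_add_card_ge A (fun f _ => hΔ.1 f)
      rw [hgrk] at hnotdep
      omega
    have hcardD : Δ.numComponents ↑D + D.card = Fintype.card N + 1 := by
      obtain ⟨e, he⟩ := hDne
      have herase := hindepD (D.erase e) (Finset.erase_ssubset he)
      have hcarde : (D.erase e).card + 1 = D.card := Finset.card_erase_add_one he
      have hmono : Δ.numComponents ↑D ≤ Δ.numComponents ↑(D.erase e) := by
        apply Δ.numComponents_mono
        rw [Finset.coe_erase]
        exact Set.diff_subset
      have hle := Δ.numComponents_le (↑D : Set E')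
      rw [hgrk] at hDdep
      omega
    have hcircleD := Δ.isCircle_of_minimal_dependent hDne (fun f _ => hΔ.1 f) hcardD hindepD
    set C : Finset ↥Ehat := SE₀.filter (fun e => π e ∈ D) with hC
    have hCsub₀ : C ⊆ SE₀ := Finset.filter_subset _ _
    have hCimg : C.image π = D := by
      ext f
      rw [Finset.mem_image]
      constructor
      · rintro ⟨e, he, rfl⟩
        exact (Finset.mem_filter.mp he).2
      · intro hf
        obtain ⟨e, he, rfl⟩ := Finset.mem_image.mp (hDF₀ hf)
        exact ⟨e, Finset.mem_filter.mpr ⟨he, hf⟩, rfl⟩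
    have hinjC : Set.InjOn π ↑C := hinj₀.mono (Finset.coe_subset.mpr hCsub₀)
    have hCcir : Γ.IsCircle C :=
      Γ.isCircle_of_image Δ π hends hinjC (by rw [hCimg]; exact hcircleD)
    have hCbal := hbal.2 C (Finset.coe_subset.mpr (hCsub₀.trans hsub₀)) hCcir
    have hnotin : e₀ ∉ G.span ↑(C.image (Subtype.val : ↥Ehat → P)) := by
      intro hmem
      apply hCbal.2
      rw [Finset.coe_image] at hmem
      exact hmem
    have hCind : G.Indep ↑(C.image (Subtype.val : ↥Ehat → P)) :=
      G.indep_mono (Finset.coe_subset.mpr (Finset.image_subset_image hCsub₀)) hindep₀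
    have hrkC : G.rank ↑(C.image (Subtype.val : ↥Ehat → P)) = C.card := by
      rw [G.rank_indep hCind, Finset.card_image_of_injOn Subtype.coe_injective.injOn]
    have hrkCins : G.rank ↑(insert e₀ (C.image (Subtype.val : ↥Ehat → P))) = C.card + 1 := by
      rw [G.rank_insert_of_not_mem_span hnotin, hrkC]
    have hrkCins2 := G.rank_insert_e₀ P' Δ z' e₀ Ehat hE hP' hz'mem he₀ hne hz'rep C
    rw [hCimg] at hrkCins2
    have hcardC : D.card = C.card := by
      rw [← hCimg]
      exact Finset.card_image_of_injOn hinjC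
    have hle := Δ.numComponents_le (↑D : Set E')
    rw [hgrk] at hrkCins2
    omega
  · -- two parallel edges
    rw [Set.InjOn] at hinj
    push_neg at hinj
    obtain ⟨e, he, e', he', hpar, hnee⟩ := hinj
    have hC : Γ.IsCircle ({e, e'} : Finset ↥Ehat) := Γ.isCircle_pair hnee
      (show Δ.ends (π e) = Δ.ends (π e') by rw [hpar]) (hΓlink e)
    have hballed := hbal.2 _ (by
      intro x hx
      rw [Finset.mem_coe, Finset.mem_insert, Finset.mem_singleton] at hx
      rcases hx with rfl | rfl
      · exact he
      · exact he') hC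
    apply hballed.2
    have hspan := G.parallel_span P' z' e₀ Ehat hE hP' hz'mem he₀ hpar hnee
    refine Set.mem_of_mem_of_subset hspan (G.span_mono ?_)
    intro y hy
    rcases hy with rfl | hy
    · exact ⟨e, by simp, rfl⟩
    · rw [Set.mem_singleton_iff] at hy
      subst hy
      exact ⟨e', by simp, rfl⟩

end ProjGeom

namespace ProjGeom

variable {P N E' : Type*} (G : ProjGeom P)
variable (P' : Set P) (Δ : MGraph N E') (z' : E' → P) (e₀ : P) (Ehat : Set P)
variable (hE : ∀ x ∈ Ehat, ∃ f : E', x ∈ G.line (z' f) e₀)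
variable [Fintype N]

theorem theta_balanced (hP' : G.IsHyperplane P') (hΔ : Δ.IsSimple)
    (hz'mem : ∀ f : E', z' f ∈ P')
    (hz'rep : ∀ S : Finset E', Δ.graphicRk (↑S : Set E') = G.rank (z' '' ↑S))
    (he₀ : e₀ ∉ P') (hne : e₀ ∉ Ehat) (u v : N) (P₁ P₂ P₃ : Finset ↥Ehat)
    (h₁ : (G.orthoGraph Δ z' e₀ Ehat hE).IsPath P₁ u v)
    (h₂ : (G.orthoGraph Δ z' e₀ Ehat hE).IsPath P₂ u v)
    (h₃ : (G.orthoGraph Δ z' e₀ Ehat hE).IsPath P₃ u v)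
    (d₁₂ : Disjoint P₁ P₂) (d₁₃ : Disjoint P₁ P₃) (d₂₃ : Disjoint P₂ P₃)
    (n₁₂ : (↑((G.orthoGraph Δ z' e₀ Ehat hE).nodesOf P₁)
      ∩ ↑((G.orthoGraph Δ z' e₀ Ehat hE).nodesOf P₂) : Set N) = {u, v})
    (n₁₃ : (↑((G.orthoGraph Δ z' e₀ Ehat hE).nodesOf P₁)
      ∩ ↑((G.orthoGraph Δ z' e₀ Ehat hE).nodesOf P₃) : Set N) = {u, v})
    (n₂₃ : (↑((G.orthoGraph Δ z' e₀ Ehat hE).nodesOf P₂)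
      ∩ ↑((G.orthoGraph Δ z' e₀ Ehat hE).nodesOf P₃) : Set N) = {u, v})
    (b₁₂ : P₁ ∪ P₂ ∈ G.orthoBal Δ z' e₀ Ehat hE)
    (b₁₃ : P₁ ∪ P₃ ∈ G.orthoBal Δ z' e₀ Ehat hE) :
    P₂ ∪ P₃ ∈ G.orthoBal Δ z' e₀ Ehat hE := by
  classical
  set Γ := G.orthoGraph Δ z' e₀ Ehat hE with hΓdef
  set π := G.orthoProj z' e₀ Ehat hE with hπdef
  have hends : ∀ e : ↥Ehat, Γ.ends e = Δ.ends (π e) := fun _ => rfl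
  have huv : u ≠ v := h₁.2.1
  refine ⟨Γ.isCircle_union_paths h₂ h₃ d₂₃ n₂₃, ?_⟩
  intro hsp0
  have hsp : e₀ ∈ G.span ↑((P₂ ∪ P₃).image (Subtype.val : ↥Ehat → P)) := by
    rw [Finset.coe_image]; exact hsp0
  -- notation
  set C₁₂ : Finset ↥Ehat := P₁ ∪ P₂ with hC₁₂
  set C₁₃ : Finset ↥Ehat := P₁ ∪ P₃ with hC₁₃
  set T : Finset ↥Ehat := P₁ ∪ P₂ ∪ P₃ with hT
  have hcir₁₂ : Γ.IsCircle C₁₂ := b₁₂.1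
  have hcir₁₃ : Γ.IsCircle C₁₃ := b₁₃.1
  have hnotin₁₂ : e₀ ∉ G.span ↑(C₁₂.image (Subtype.val : ↥Ehat → P)) := by
    intro h
    apply b₁₂.2
    rw [Finset.coe_image] at h
    exact h
  have hnotin₁₃ : e₀ ∉ G.span ↑(C₁₃.image (Subtype.val : ↥Ehat → P)) := by
    intro h
    apply b₁₃.2
    rw [Finset.coe_image] at h
    exact h
  have hr₁₂ : G.rank ↑(C₁₂.image (Subtype.val : ↥Ehat → P))
      = Δ.graphicRk ↑(C₁₂.image π) := by
    have h := G.rank_insert_e₀ P' Δ z' e₀ Ehat hE hP' hz'mem he₀ hne hz'rep C₁₂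
    rw [← hπdef] at h
    rw [G.rank_insert_of_not_mem_span hnotin₁₂] at h
    omega
  have hr₁₃ : G.rank ↑(C₁₃.image (Subtype.val : ↥Ehat → P))
      = Δ.graphicRk ↑(C₁₃.image π) := by
    have h := G.rank_insert_e₀ P' Δ z' e₀ Ehat hE hP' hz'mem he₀ hne hz'rep C₁₃
    rw [← hπdef] at h
    rw [G.rank_insert_of_not_mem_span hnotin₁₃] at h
    omega
  have hnotinP₁ : e₀ ∉ G.span ↑(P₁.image (Subtype.val : ↥Ehat → P)) := fun h =>
    hnotin₁₂ (G.span_mono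
      (Finset.coe_subset.mpr (Finset.image_subset_image Finset.subset_union_left)) h)
  have hrP₁ : G.rank ↑(P₁.image (Subtype.val : ↥Ehat → P))
      = Δ.graphicRk ↑(P₁.image π) := by
    have h := G.rank_insert_e₀ P' Δ z' e₀ Ehat hE hP' hz'mem he₀ hne hz'rep P₁
    rw [← hπdef] at h
    rw [G.rank_insert_of_not_mem_span hnotinP₁] at h
    omega
  have hsub₂₃T : P₂ ∪ P₃ ⊆ T := by
    apply Finset.union_subset
    · exact (Finset.subset_union_right).trans Finset.subset_union_left
    · exact Finset.subset_union_right
  have hspT : e₀ ∈ G.span ↑(T.image (Subtype.val : ↥Ehat → P)) :=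
    G.span_mono (Finset.coe_subset.mpr (Finset.image_subset_image hsub₂₃T)) hsp
  have hrT : G.rank ↑(T.image (Subtype.val : ↥Ehat → P))
      = Δ.graphicRk ↑(T.image π) + 1 := by
    have h := G.rank_insert_e₀ P' Δ z' e₀ Ehat hE hP' hz'mem he₀ hne hz'rep T
    rw [← hπdef] at h
    rw [G.rank_insert_of_mem_span hspT] at h
    exact h
  -- submodularity
  have hCunion : C₁₂ ∪ C₁₃ = T := by
    rw [hC₁₂, hC₁₃, hT]
    ext x
    simp only [Finset.mem_union]
    tauto
  have hCinter : C₁₂ ∩ C₁₃ = P₁ := by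
    rw [hC₁₂, hC₁₃]
    ext x
    simp only [Finset.mem_inter, Finset.mem_union]
    constructor
    · rintro ⟨h1 | h1, h2 | h2⟩
      · exact h1
      · exact h1
      · exact h2
      · exact absurd h2 (Finset.disjoint_left.mp d₂₃ h1)
    · intro h
      exact ⟨Or.inl h, Or.inl h⟩
  have hsubmod : G.rank ↑(T.image (Subtype.val : ↥Ehat → P))
      + G.rank ↑(P₁.image (Subtype.val : ↥Ehat → P))
      ≤ G.rank ↑(C₁₂.image (Subtype.val : ↥Ehat → P))
        + G.rank ↑(C₁₃.image (Subtype.val : ↥Ehat → P)) := by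
    have h1 : C₁₂.image (Subtype.val : ↥Ehat → P) ∪ C₁₃.image (Subtype.val : ↥Ehat → P)
        = T.image (Subtype.val : ↥Ehat → P) := by
      rw [← Finset.image_union, hCunion]
    have h2 : C₁₂.image (Subtype.val : ↥Ehat → P) ∩ C₁₃.image (Subtype.val : ↥Ehat → P)
        = P₁.image (Subtype.val : ↥Ehat → P) := by
      rw [← Finset.image_inter _ _ Subtype.coe_injective, hCinter]
    have h3 := G.rank_submod (C₁₂.image (Subtype.val : ↥Ehat → P))
      (C₁₃.image (Subtype.val : ↥Ehat → P))
    rw [h1, h2] at h3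
    exact h3
  -- rank-to-node-count conversion
  have hgk : ∀ X : Finset ↥Ehat, X.Nonempty → Γ.ConnEdges ↑X →
      Δ.graphicRk ↑(X.image π) + 1 = (Γ.nodesOf X).card := by
    intro X hne' hconn
    have himg : Δ.ConnEdges ↑(X.image π) := Γ.connEdges_image Δ π hends hconn
    have hnn : (X.image π).Nonempty := hne'.image π
    have hcount := Δ.numComponents_connEdges hnn (fun f _ => hΔ.1 f) himg
    have hnodes : Δ.nodesOf (X.image π) = Γ.nodesOf X := Γ.nodesOf_image Δ π hends X
    rw [hnodes] at hcount
    have hle := Δ.numComponents_le (↑(X.image π) : Set E')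
    show Fintype.card N - Δ.numComponents ↑(X.image π) + 1 = _
    omega
  -- connectivity facts
  have hconn₁₂ : Γ.ConnEdges ↑C₁₂ := hcir₁₂.2.2.1
  have hconn₁₃ : Γ.ConnEdges ↑C₁₃ := hcir₁₃.2.2.1
  have hconnP₁ : Γ.ConnEdges ↑P₁ := h₁.2.2.2.1
  have hconnT : Γ.ConnEdges ↑T := by
    obtain ⟨a, ha, hua⟩ := Γ.mem_nodesOf.mp h₁.2.2.2.2.1
    obtain ⟨b, hb, hub⟩ := Γ.mem_nodesOf.mp h₃.2.2.2.2.1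
    have h := Γ.connEdges_union hconn₁₂ h₃.2.2.2.1
      (Finset.mem_coe.mpr (Finset.mem_union_left P₂ ha)) (Finset.mem_coe.mpr hb) hua hub
    rw [← Finset.coe_union] at h
    exact h
  -- nonemptiness
  have hP₁ne : P₁.Nonempty := h₁.1
  have hP₂ne : P₂.Nonempty := h₂.1
  have hP₃ne : P₃.Nonempty := h₃.1
  have hg₁₂ := hgk C₁₂ (hP₁ne.mono Finset.subset_union_left) hconn₁₂
  have hg₁₃ := hgk C₁₃ (hP₁ne.mono Finset.subset_union_left) hconn₁₃
  have hgP₁ := hgk P₁ hP₁ne hconnP₁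
  have hgT := hgk T (hP₁ne.mono (Finset.subset_union_left.trans Finset.subset_union_left)) hconnT
  -- node count identities
  have hcard_uv : ∀ s t : Finset ↥Ehat,
      (↑(Γ.nodesOf s) ∩ ↑(Γ.nodesOf t) : Set N) = {u, v} →
      (Γ.nodesOf s ∩ Γ.nodesOf t).card = 2 := by
    intro s t hst
    have : Γ.nodesOf s ∩ Γ.nodesOf t = ({u, v} : Finset N) := by
      apply Finset.coe_injective
      rw [Finset.coe_inter, hst]
      simp
    rw [this, Finset.card_insert_of_notMem (by simpa using huv), Finset.card_singleton]
  have hk₁₂ : (Γ.nodesOf C₁₂).card + 2 = (Γ.nodesOf P₁).card + (Γ.nodesOf P₂).card := by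
    have h := Finset.card_union_add_card_inter (Γ.nodesOf P₁) (Γ.nodesOf P₂)
    rw [hcard_uv P₁ P₂ n₁₂] at h
    rw [hC₁₂, Γ.nodesOf_union]
    omega
  have hk₁₃ : (Γ.nodesOf C₁₃).card + 2 = (Γ.nodesOf P₁).card + (Γ.nodesOf P₃).card := by
    have h := Finset.card_union_add_card_inter (Γ.nodesOf P₁) (Γ.nodesOf P₃)
    rw [hcard_uv P₁ P₃ n₁₃] at h
    rw [hC₁₃, Γ.nodesOf_union]
    omega
  have hkT : (Γ.nodesOf T).card + 2 = (Γ.nodesOf C₁₂).card + (Γ.nodesOf P₃).card := by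
    have hinter : Γ.nodesOf C₁₂ ∩ Γ.nodesOf P₃ = ({u, v} : Finset N) := by
      rw [hC₁₂, Γ.nodesOf_union, Finset.union_inter_distrib_right]
      have e1 : Γ.nodesOf P₁ ∩ Γ.nodesOf P₃ = ({u, v} : Finset N) := by
        apply Finset.coe_injective
        rw [Finset.coe_inter, n₁₃]
        simp
      have e2 : Γ.nodesOf P₂ ∩ Γ.nodesOf P₃ = ({u, v} : Finset N) := by
        apply Finset.coe_injective
        rw [Finset.coe_inter, n₂₃]
        simp
      rw [e1, e2, Finset.union_self]
    have h := Finset.card_union_add_card_inter (Γ.nodesOf C₁₂) (Γ.nodesOf P₃)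
    rw [hinter, Finset.card_insert_of_notMem (by simpa using huv),
      Finset.card_singleton] at h
    have hTeq : Γ.nodesOf T = Γ.nodesOf C₁₂ ∪ Γ.nodesOf P₃ := by
      rw [hT, hC₁₂]
      exact Γ.nodesOf_union (P₁ ∪ P₂) P₃
    rw [hTeq]
    omega
  omega

end ProjGeom

/-! ## Statement 11 -/

/-- Let `P` be a projective geometry, `P'` a hyperplane, `Δ` a
nonempty simple graph, `z'` a projective representation of the graphic matroid
`G(Δ)` in `P'`, `e₀ ∈ P∖P'`, and `Ehat ⊆ Ê(Δ, e₀)∖{e₀}`.  Then the class of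
balanced circles of the constructed graph is a linear class, so `Ω₀(Ehat)` is a
biased graph, and `e ↦ ê, e₀ ↦ ê₀` is a matroid isomorphism
`L₀(Ω₀(Ehat)) ≅ M(Ehat ∪ {ê₀})`. -/
theorem stmt11 {P N E' : Type*} [Fintype N] [Nonempty N] (G : ProjGeom P)
    (P' : Set P) (hP' : G.IsHyperplane P')
    (Δ : MGraph N E') (hΔ : Δ.IsSimple)
    (z' : E' → P) (hz'mem : ∀ f : E', z' f ∈ P')
    (hz'inj : Function.Injective z')
    (hz'rep : ∀ S : Finset E', Δ.graphicRk (↑S : Set E') = G.rank (z' '' ↑S))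
    (e₀ : P) (he₀ : e₀ ∉ P')
    (Ehat : Set P) (hne : e₀ ∉ Ehat)
    (hE : ∀ x ∈ Ehat, ∃ f : E', x ∈ G.line (z' f) e₀) :
    (G.orthoGraph Δ z' e₀ Ehat hE).IsLinearClass (G.orthoBal Δ z' e₀ Ehat hE) ∧
    ∀ S : Finset (↥Ehat ⊕ Unit),
      (G.orthoGraph Δ z' e₀ Ehat hE).liftRk (G.orthoBal Δ z' e₀ Ehat hE)
          (↑S : Set (↥Ehat ⊕ Unit))
        = G.rank ((Sum.elim (Subtype.val : ↥Ehat → P) (fun _ : Unit => e₀)) '' ↑S) := by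
  classical
  constructor
  · -- the class of balanced circles is a linear class
    constructor
    · intro C hC
      exact hC.1
    · intro u v P₁ P₂ P₃ h₁ h₂ h₃ d₁₂ d₁₃ d₂₃ n₁₂ n₁₃ n₂₃ b₁₂ b₁₃
      exact G.theta_balanced P' Δ z' e₀ Ehat hE hP' hΔ hz'mem hz'rep he₀ hne u v
        P₁ P₂ P₃ h₁ h₂ h₃ d₁₂ d₁₃ d₂₃ n₁₂ n₁₃ n₂₃ b₁₂ b₁₃
  · -- the rank formula
    intro S
    set Γ := G.orthoGraph Δ z' e₀ Ehat hE with hΓdef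
    set B := G.orthoBal Δ z' e₀ Ehat hE with hBdef
    set π := G.orthoProj z' e₀ Ehat hE with hπdef
    set SE : Finset ↥Ehat :=
      S.preimage Sum.inl Sum.inl_injective.injOn with hSEdef
    have hsetSE : {e : ↥Ehat | Sum.inl e ∈ (↑S : Set (↥Ehat ⊕ Unit))} = ↑SE := by
      ext e
      rw [hSEdef]
      simp [Finset.mem_preimage]
    have hmemSE : ∀ e : ↥Ehat, e ∈ SE ↔ Sum.inl e ∈ S := by
      intro e
      rw [hSEdef]
      exact Finset.mem_preimage
    have himg_val : Sum.inr () ∉ S →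
        (Sum.elim (Subtype.val : ↥Ehat → P) (fun _ : Unit => e₀)) ''
            (↑S : Set (↥Ehat ⊕ Unit))
          = ↑(SE.image (Subtype.val : ↥Ehat → P)) := by
      intro hS
      ext x
      constructor
      · rintro ⟨s, hs, rfl⟩
        cases s with
        | inl e =>
          show (e : P) ∈ _
          exact Finset.mem_coe.mpr (Finset.mem_image_of_mem _
            ((hmemSE e).mpr (Finset.mem_coe.mp hs)))
        | inr u =>
          cases u
          exact absurd (Finset.mem_coe.mp hs) hS
      · intro hx
        obtain ⟨e, he, rfl⟩ := Finset.mem_image.mp (Finset.mem_coe.mp hx)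
        exact ⟨Sum.inl e, Finset.mem_coe.mpr ((hmemSE e).mp he), rfl⟩
    have himg_ins : Sum.inr () ∈ S →
        (Sum.elim (Subtype.val : ↥Ehat → P) (fun _ : Unit => e₀)) ''
            (↑S : Set (↥Ehat ⊕ Unit))
          = ↑(insert e₀ (SE.image (Subtype.val : ↥Ehat → P))) := by
      intro hS
      ext x
      rw [Finset.coe_insert]
      constructor
      · rintro ⟨s, hs, rfl⟩
        cases s with
        | inl e =>
          refine Set.mem_insert_of_mem _ ?_
          show (e : P) ∈ _
          exact Finset.mem_coe.mpr (Finset.mem_image_of_mem _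
            ((hmemSE e).mpr (Finset.mem_coe.mp hs)))
        | inr u =>
          cases u
          exact Set.mem_insert _ _
      · intro hx
        rcases hx with rfl | hx
        · exact ⟨Sum.inr (), Finset.mem_coe.mpr hS, rfl⟩
        · obtain ⟨e, he, rfl⟩ := Finset.mem_image.mp (Finset.mem_coe.mp hx)
          exact ⟨Sum.inl e, Finset.mem_coe.mpr ((hmemSE e).mp he), rfl⟩
    have hrins := G.rank_insert_e₀ P' Δ z' e₀ Ehat hE hP' hz'mem he₀ hne hz'rep SE
    rw [← hπdef] at hrins
    have hcomp := G.numComponents_transfer Δ z' e₀ Ehat hE SE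
    rw [← hΓdef, ← hπdef] at hcomp
    have hgrk : Δ.graphicRk (↑(SE.image π) : Set E')
        = Fintype.card N - Δ.numComponents ↑(SE.image π) := rfl
    have hcle := Δ.numComponents_le (↑(SE.image π) : Set E')
    by_cases hcond : Γ.IsBalancedSet B {e : ↥Ehat | Sum.inl e ∈ (↑S : Set (↥Ehat ⊕ Unit))}
        ∧ Sum.inr () ∉ (↑S : Set (↥Ehat ⊕ Unit))
    · -- balanced case
      have hlift : Γ.liftRk B (↑S : Set (↥Ehat ⊕ Unit))
          = Fintype.card N - Γ.numComponents {e : ↥Ehat | Sum.inl e ∈ (↑S : Set (↥Ehat ⊕ Unit))} := by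
        unfold MGraph.liftRk
        rw [if_pos hcond]
      have hbal : Γ.IsBalancedSet B ↑SE := by
        rw [← hsetSE]
        exact hcond.1
      have hnotspan : e₀ ∉ G.span ↑(SE.image (Subtype.val : ↥Ehat → P)) := by
        intro h
        exact G.balanced_not_spans P' Δ z' e₀ Ehat hE hP' hΔ hz'mem hz'rep he₀ hne SE hbal h
      have hr := G.rank_insert_of_not_mem_span hnotspan
      rw [hlift, hsetSE, hcomp, himg_val (fun h => hcond.2 (Finset.mem_coe.mpr h))]
      omega
    · -- unbalanced case
      have hlift : Γ.liftRk B (↑S : Set (↥Ehat ⊕ Unit))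
          = Fintype.card N - Γ.numComponents {e : ↥Ehat | Sum.inl e ∈ (↑S : Set (↥Ehat ⊕ Unit))} + 1 := by
        unfold MGraph.liftRk
        rw [if_neg hcond]
      by_cases hinr : Sum.inr () ∈ S
      · rw [hlift, hsetSE, hcomp, himg_ins hinr, hrins]
        omega
      · -- e₀ is not in S but S is unbalanced
        have hnb : ¬ Γ.IsBalancedSet B ↑SE := by
          rw [← hsetSE]
          intro h
          exact hcond ⟨h, fun hc => hinr (Finset.mem_coe.mp hc)⟩
        have hlinks : ∀ e ∈ (↑SE : Set ↥Ehat), Γ.IsLink e := fun e _ => hΔ.1 (π e)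
        have hex : ¬ ∀ C : Finset ↥Ehat, ↑C ⊆ (↑SE : Set ↥Ehat) → Γ.IsCircle C → C ∈ B :=
          fun hall => hnb ⟨hlinks, hall⟩
        push_neg at hex
        obtain ⟨C, hCsub, hCcir, hCnot⟩ := hex
        have hCspan : e₀ ∈ G.span (Subtype.val '' (↑C : Set ↥Ehat)) := by
          by_contra h'
          exact hCnot ⟨hCcir, h'⟩
        have hspan : e₀ ∈ G.span ↑(SE.image (Subtype.val : ↥Ehat → P)) := by
          refine G.span_le_span ?_ hCspan
          intro x hx
          obtain ⟨e, he, rfl⟩ := hx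
          refine G.subset_span _ ?_
          exact Finset.mem_coe.mpr (Finset.mem_image_of_mem _ (Finset.mem_coe.mp (hCsub he)))
        have hr := G.rank_insert_of_mem_span hspan
        rw [hlift, hsetSE, hcomp, himg_val hinr]
        omega
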